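/- arXiv:2601.10260 — 5 statements merged into one kernel-verified Lean document; each statement's English description precedes it below -/
import Mathlib

section
/- Let A ∈ ℝ^{n×n} and T > 0. Suppose that for every pair λ, μ of complex eigenvalues of A and every nonzero integer ℓ, λ + μ ≠ (2ℓπ/T)·√(−1). Then the linear map F_T : ℝ^{n×n} → ℝ^{n×n}, B ↦ ∫₀^T e^{At} B e^{Aᵀt} dt, is injective. -/
open Matrix intervalIntegral

/-- Matrix exponential `e^{tA}` of a real matrix. -/
noncomputable def matExp {n : ℕ} (A : Matrix (Fin n) (Fin n) ℝ) (t : ℝ) :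
    Matrix (Fin n) (Fin n) ℝ :=
  NormedSpace.exp (t • A)

/-- Finite-horizon controllability Gramian `W̃(B;T) = ∫₀ᵀ e^{At} B e^{Aᵀt} dt`,
defined entrywise. -/
noncomputable def gramian {n : ℕ} (A B : Matrix (Fin n) (Fin n) ℝ) (T : ℝ) :
    Matrix (Fin n) (Fin n) ℝ :=
  fun i j => ∫ t in (0:ℝ)..T, (matExp A t * B * (matExp A t)ᵀ) i j

section Aux

open NormedSpace Polynomial

attribute [local instance] Matrix.linftyOpNormedRing Matrix.linftyOpNormedAlgebra

variable {n : ℕ}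

theorem exp_semiconj (X C Y : Matrix (Fin n) (Fin n) ℂ) (h : X * C = C * Y) :
    exp X * C = C * exp Y := by
  have hs : SemiconjBy C Y X := h.symm
  have h1 : Summable fun k : ℕ => ((k.factorial : ℂ))⁻¹ • X ^ k := expSeries_summable' (𝕂 := ℂ) X
  have h2 : Summable fun k : ℕ => ((k.factorial : ℂ))⁻¹ • Y ^ k := expSeries_summable' (𝕂 := ℂ) Y
  have e1 := ((ContinuousLinearMap.mul ℂ (Matrix (Fin n) (Fin n) ℂ)).flip C).map_tsum h1
  have e2 := (ContinuousLinearMap.mul ℂ (Matrix (Fin n) (Fin n) ℂ) C).map_tsum h2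
  simp only [ContinuousLinearMap.flip_apply, ContinuousLinearMap.mul_apply'] at e1 e2
  rw [exp_eq_tsum ℂ]
  refine e1.trans (Eq.trans ?_ e2.symm)
  refine tsum_congr fun k => ?_
  rw [smul_mul_assoc, mul_smul_comm, (hs.pow_right k).eq]

theorem conj_eig (M C : Matrix (Fin n) (Fin n) ℂ) (ν : ℂ)
    (hC : M * C + C * Mᵀ = ν • C) (z : ℂ) :
    exp (z • M) * C * (exp (z • M))ᵀ = Complex.exp (z * ν) • C := by
  have hMC : M * C = C * (ν • 1 - Mᵀ) := by
    rw [mul_sub, mul_smul_comm, mul_one]; exact eq_sub_of_add_eq hC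
  have hsemi : (z • M) * C = C * (z • (ν • 1 - Mᵀ)) := by
    rw [smul_mul_assoc, mul_smul_comm, hMC]
  have h1 : exp (z • M) * C = C * exp (z • (ν • 1 - Mᵀ)) := exp_semiconj _ _ _ hsemi
  have hz : z • ((ν • (1:Matrix (Fin n) (Fin n) ℂ)) - Mᵀ)
      = algebraMap ℂ (Matrix (Fin n) (Fin n) ℂ) (z * ν) + (-(z • Mᵀ)) := by
    rw [smul_sub, smul_smul, Algebra.algebraMap_eq_smul_one]; abel
  have hcomm : Commute (algebraMap ℂ (Matrix (Fin n) (Fin n) ℂ) (z * ν)) (-(z • Mᵀ)) :=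
    Commute.neg_right (Algebra.commutes _ _)
  have h2 : exp (z • ((ν • (1:Matrix (Fin n) (Fin n) ℂ)) - Mᵀ)) =
      Complex.exp (z * ν) • exp (-(z • Mᵀ)) := by
    rw [hz, Matrix.exp_add_of_commute _ _ hcomm]
    erw [← map_exp (algebraMap ℂ (Matrix (Fin n) (Fin n) ℂ)) (continuous_algebraMap ℂ _)]
    rw [Complex.exp_eq_exp_ℂ, Algebra.algebraMap_eq_smul_one, smul_mul_assoc, one_mul]
  have h3 : (exp (z • M))ᵀ = exp (z • Mᵀ) := by
    rw [← Matrix.transpose_smul, Matrix.exp_transpose]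
  have h4 : exp (-(z • Mᵀ)) * exp (z • Mᵀ) = 1 := by
    rw [← Matrix.exp_add_of_commute _ _ (Commute.neg_left (Commute.refl (z • Mᵀ))), neg_add_cancel, exp_zero]
  rw [h3, h1, h2, mul_smul_comm, smul_mul_assoc, mul_assoc, h4, mul_one]

theorem det_eval_charpoly (M : Matrix (Fin n) (Fin n) ℂ) (a : ℂ) :
    (M.charpoly).eval a = (a • (1 : Matrix (Fin n) (Fin n) ℂ) - M).det := by
  rw [Matrix.charpoly, eval_det, matPolyEquiv_charmatrix]
  rw [eval_sub, eval_X, eval_C]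
  congr 1
  ext i j
  simp [Matrix.scalar_apply, Matrix.smul_apply, Matrix.one_apply, Matrix.diagonal_apply]

theorem mem_spectrum_of_det (M : Matrix (Fin n) (Fin n) ℂ) (a : ℂ)
    (h : (a • (1 : Matrix (Fin n) (Fin n) ℂ) - M).det = 0) : a ∈ spectrum ℂ M := by
  rw [spectrum.mem_iff]
  intro hu
  rw [Matrix.isUnit_iff_isUnit_det] at hu
  rw [Algebra.algebraMap_eq_smul_one] at hu
  rw [h] at hu
  exact (not_isUnit_zero) hu

theorem aeval_semiconj (M C N : Matrix (Fin n) (Fin n) ℂ) (h : M * C = C * N) (p : ℂ[X]) :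
    (aeval M p) * C = C * (aeval N p) := by
  induction p using Polynomial.induction_on' with
  | add p q hp hq => rw [map_add, map_add, add_mul, mul_add, hp, hq]
  | monomial k a =>
    have hs : SemiconjBy C N M := h.symm
    have hpow : M ^ k * C = C * N ^ k := ((hs.pow_right k).eq).symm
    rw [aeval_monomial, aeval_monomial, mul_assoc, ← mul_assoc _ (M ^ k), ← mul_assoc C,
      ← Algebra.commutes a C, mul_assoc, hpow, ← mul_assoc]

theorem sylvester_spectrum (M C : Matrix (Fin n) (Fin n) ℂ) (ν : ℂ) (hC0 : C ≠ 0)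
    (hC : M * C + C * Mᵀ = ν • C) :
    ∃ lam mu : ℂ, lam ∈ spectrum ℂ M ∧ mu ∈ spectrum ℂ M ∧ lam + mu = ν := by
  have hMC : M * C = C * (ν • 1 - Mᵀ) := by
    rw [mul_sub, mul_smul_comm, mul_one]; exact eq_sub_of_add_eq hC
  have hCp : C * aeval (ν • 1 - Mᵀ) M.charpoly = 0 := by
    rw [← aeval_semiconj M C _ hMC, M.aeval_self_charpoly, zero_mul]
  have hprod : M.charpoly
      = ((M.charpoly.roots.toList).map fun a => X - Polynomial.C a).prod := by
    conv_lhs => rw [(IsAlgClosed.splits M.charpoly).eq_prod_roots_of_monic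
      M.charpoly_monic]
    conv_lhs => rw [← Multiset.coe_toList M.charpoly.roots]
    rw [Multiset.map_coe, Multiset.prod_coe]
  have haeval : aeval (ν • 1 - Mᵀ) M.charpoly
      = ((M.charpoly.roots.toList).map fun a => (ν • 1 - Mᵀ) - a • 1).prod := by
    conv_lhs => rw [hprod]
    rw [map_list_prod (aeval ((ν • 1 - Mᵀ) : Matrix (Fin n) (Fin n) ℂ)), List.map_map]
    congr 1
    refine List.map_congr_left fun a _ => ?_
    simp [Algebra.algebraMap_eq_smul_one]
  have hex : ∃ a ∈ M.charpoly.roots.toList,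
      ¬ IsUnit ((ν • 1 - Mᵀ) - a • (1:Matrix (Fin n) (Fin n) ℂ)) := by
    by_contra hall
    push_neg at hall
    have hu : IsUnit (aeval (ν • 1 - Mᵀ) M.charpoly) := by
      rw [haeval]
      refine List.prod_isUnit fun m hm => ?_
      obtain ⟨a, ha, rfl⟩ := List.mem_map.mp hm
      exact hall a ha
    obtain ⟨u, hu⟩ := hu
    apply hC0
    calc C = C * (aeval (ν • 1 - Mᵀ) M.charpoly * ↑u⁻¹) := by rw [← hu, Units.mul_inv, mul_one]
    _ = (C * aeval (ν • 1 - Mᵀ) M.charpoly) * ↑u⁻¹ := by rw [mul_assoc]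
    _ = 0 := by rw [hCp, zero_mul]
  obtain ⟨a, hal, hau⟩ := hex
  refine ⟨a, ν - a, ?_, ?_, by ring⟩
  · apply mem_spectrum_of_det
    rw [← det_eval_charpoly]
    have ha : a ∈ M.charpoly.roots := by rwa [← Multiset.mem_toList]
    exact (Polynomial.mem_roots (M.charpoly_monic.ne_zero)).mp ha
  · apply mem_spectrum_of_det
    have heq : (ν • 1 - Mᵀ) - a • (1:Matrix (Fin n) (Fin n) ℂ) = ((ν - a) • 1 - M)ᵀ := by
      rw [Matrix.transpose_sub, Matrix.transpose_smul, Matrix.transpose_one, sub_smul]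
      abel
    by_contra hdet
    exact hau (by
      rw [heq, Matrix.isUnit_iff_isUnit_det, Matrix.det_transpose]
      exact isUnit_iff_ne_zero.mpr hdet)

theorem matExp_map (A : Matrix (Fin n) (Fin n) ℝ) (t : ℝ) :
    (matExp A t).map Complex.ofReal
      = exp ((t : ℂ) • (A.map Complex.ofReal)) := by
  have hcont : Continuous
      (Complex.ofRealHom.mapMatrix : Matrix (Fin n) (Fin n) ℝ →+* Matrix (Fin n) (Fin n) ℂ) := by
    have : (⇑(Complex.ofRealHom.mapMatrix : Matrix (Fin n) (Fin n) ℝ →+* Matrix (Fin n) (Fin n) ℂ))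
        = fun X : Matrix (Fin n) (Fin n) ℝ => X.map Complex.ofReal := by
      funext X; rfl
    rw [this]
    exact continuous_id.matrix_map Complex.continuous_ofReal
  have h1 : (matExp A t).map Complex.ofReal
      = Complex.ofRealHom.mapMatrix (exp (t • A)) := rfl
  rw [h1]; refine (map_exp _ hcont _).trans ?_
  have h2 : (Complex.ofRealHom.mapMatrix (t • A) : Matrix (Fin n) (Fin n) ℂ)
      = (t : ℂ) • (A.map Complex.ofReal) := by
    ext i j
    simp [Complex.real_smul]
  rw [h2]
  rfl

theorem contE (M : Matrix (Fin n) (Fin n) ℂ) (C : Matrix (Fin n) (Fin n) ℂ) (i j : Fin n) :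
    Continuous fun t : ℝ => (exp ((t:ℂ) • M) * C * (exp ((t:ℂ) • M))ᵀ) i j := by
  have h0 : Continuous fun t : ℝ => exp ((t:ℂ) • M) :=
    exp_continuous.comp ((Complex.continuous_ofReal.smul continuous_const))
  exact ((h0.matrix_mul continuous_const).matrix_mul h0.matrix_transpose).matrix_elem i j

theorem contR (A : Matrix (Fin n) (Fin n) ℝ) (C : Matrix (Fin n) (Fin n) ℝ) (i j : Fin n) :
    Continuous fun t : ℝ => (matExp A t * C * (matExp A t)ᵀ) i j := by
  have h0 : Continuous fun t : ℝ => matExp A t :=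
    exp_continuous.comp ((continuous_id.smul continuous_const))
  exact ((h0.matrix_mul continuous_const).matrix_mul h0.matrix_transpose).matrix_elem i j

theorem map_conj_entry (X Y : Matrix (Fin n) (Fin n) ℝ) (i j : Fin n) :
    (X.map Complex.ofReal * Y.map Complex.ofReal * (X.map Complex.ofReal)ᵀ) i j
      = (((X * Y * Xᵀ) i j : ℝ) : ℂ) := by
  simp only [Matrix.mul_apply, Matrix.transpose_apply, Matrix.map_apply]
  push_cast
  rfl

end Aux

section Main

open NormedSpace Polynomial

attribute [local instance] Matrix.linftyOpNormedRing Matrix.linftyOpNormedAlgebra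

theorem stmt5 {n : ℕ} (A : Matrix (Fin n) (Fin n) ℝ) (T : ℝ) (hT : 0 < T)
    (heig : ∀ lam mu : ℂ, lam ∈ spectrum ℂ (A.map Complex.ofReal) →
      mu ∈ spectrum ℂ (A.map Complex.ofReal) →
      ∀ l : ℤ, l ≠ 0 → lam + mu ≠ (2 * l * Real.pi / T : ℝ) * Complex.I) :
    Function.Injective (fun B : Matrix (Fin n) (Fin n) ℝ => gramian A B T) := by
  intro B B' hBB'
  simp only at hBB'
  by_contra hne
  have hD0 : B - B' ≠ 0 := sub_ne_zero_of_ne hne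
  set M : Matrix (Fin n) (Fin n) ℂ := A.map Complex.ofReal with hM
  set Dc : Matrix (Fin n) (Fin n) ℂ := (B - B').map Complex.ofReal with hDc
  have hDc0 : Dc ≠ 0 := by
    intro h
    apply hD0
    ext i j
    have h2 := congrFun (congrFun h i) j
    simp only [hDc, Matrix.map_apply, Matrix.zero_apply, Complex.ofReal_eq_zero] at h2
    simpa using h2
  let K : Submodule ℂ (Matrix (Fin n) (Fin n) ℂ) :=
    { carrier := {C | ∀ i j, (∫ t in (0:ℝ)..T,
        (exp ((t:ℂ) • M) * C * (exp ((t:ℂ) • M))ᵀ) i j) = 0}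
      add_mem' := by
        intro C C' hC hC' i j
        have h1 : ∀ t : ℝ, (exp ((t:ℂ) • M) * (C + C') * (exp ((t:ℂ) • M))ᵀ) i j
            = (exp ((t:ℂ) • M) * C * (exp ((t:ℂ) • M))ᵀ) i j
            + (exp ((t:ℂ) • M) * C' * (exp ((t:ℂ) • M))ᵀ) i j := by
          intro t; rw [mul_add, add_mul, Matrix.add_apply]
        simp only [h1]
        rw [intervalIntegral.integral_add ((contE M C i j).intervalIntegrable _ _)
          ((contE M C' i j).intervalIntegrable _ _), hC i j, hC' i j, add_zero]
      zero_mem' := by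
        intro i j
        simp only [mul_zero, zero_mul, Matrix.zero_apply, intervalIntegral.integral_zero]
      smul_mem' := by
        intro c C hC i j
        have h1 : ∀ t : ℝ, (exp ((t:ℂ) • M) * (c • C) * (exp ((t:ℂ) • M))ᵀ) i j
            = c * (exp ((t:ℂ) • M) * C * (exp ((t:ℂ) • M))ᵀ) i j := by
          intro t; rw [mul_smul_comm, smul_mul_assoc, Matrix.smul_apply, smul_eq_mul]
        simp only [h1]
        rw [intervalIntegral.integral_const_mul, hC i j, mul_zero] }
  have hDK : Dc ∈ K := by
    intro i j
    have hmap : ∀ t : ℝ, (exp ((t:ℂ) • M) * Dc * (exp ((t:ℂ) • M))ᵀ) i j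
        = (((matExp A t * (B - B') * (matExp A t)ᵀ) i j : ℝ) : ℂ) := by
      intro t
      rw [hM, ← matExp_map, hDc]
      exact map_conj_entry _ _ i j
    simp only [hmap]
    rw [intervalIntegral.integral_ofReal]
    have hsub : ∀ t : ℝ, (matExp A t * (B - B') * (matExp A t)ᵀ) i j
        = (matExp A t * B * (matExp A t)ᵀ) i j - (matExp A t * B' * (matExp A t)ᵀ) i j := by
      intro t; rw [mul_sub, sub_mul, Matrix.sub_apply]
    simp only [hsub]
    rw [intervalIntegral.integral_sub ((contR A B i j).intervalIntegrable _ _)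
      ((contR A B' i j).intervalIntegrable _ _)]
    have hg : gramian A B T i j = gramian A B' T i j := by rw [hBB']
    simp only [gramian] at hg
    rw [hg, sub_self, Complex.ofReal_zero]
  haveI : Nontrivial K := nontrivial_of_ne ⟨Dc, hDK⟩ 0 (by
    intro h
    exact hDc0 (by simpa [Submodule.mk_eq_zero] using h))
  let Lfull : Matrix (Fin n) (Fin n) ℂ →ₗ[ℂ] Matrix (Fin n) (Fin n) ℂ :=
    { toFun := fun C => M * C + C * Mᵀ
      map_add' := by
        intro x y
        show M * (x + y) + (x + y) * Mᵀ = (M * x + x * Mᵀ) + (M * y + y * Mᵀ)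
        rw [mul_add, add_mul]; abel
      map_smul' := by intro c x; simp [mul_smul_comm, smul_mul_assoc, smul_add] }
  have hEM : ∀ t : ℝ, exp ((t:ℂ) • M) * M = M * exp ((t:ℂ) • M) := by
    intro t
    exact exp_semiconj _ _ _ (by rw [smul_mul_assoc, mul_smul_comm])
  have hLK : ∀ C ∈ K, Lfull C ∈ K := by
    intro C hC i j
    have hFc : Continuous fun t : ℝ => exp ((t:ℂ) • M) * C * (exp ((t:ℂ) • M))ᵀ := by
      have h0 : Continuous fun t : ℝ => exp ((t:ℂ) • M) :=
        exp_continuous.comp ((Complex.continuous_ofReal.smul continuous_const))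
      exact (h0.matrix_mul continuous_const).matrix_mul h0.matrix_transpose
    have hpt : ∀ t : ℝ, (exp ((t:ℂ) • M) * (Lfull C) * (exp ((t:ℂ) • M))ᵀ) i j
        = (M * (exp ((t:ℂ) • M) * C * (exp ((t:ℂ) • M))ᵀ)) i j
          + ((exp ((t:ℂ) • M) * C * (exp ((t:ℂ) • M))ᵀ) * Mᵀ) i j := by
      intro t
      have hMt : Mᵀ * (exp ((t:ℂ) • M))ᵀ = (exp ((t:ℂ) • M))ᵀ * Mᵀ := by
        rw [← Matrix.transpose_mul, ← Matrix.transpose_mul, hEM]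
      have : exp ((t:ℂ) • M) * (Lfull C) * (exp ((t:ℂ) • M))ᵀ
          = M * (exp ((t:ℂ) • M) * C * (exp ((t:ℂ) • M))ᵀ)
            + (exp ((t:ℂ) • M) * C * (exp ((t:ℂ) • M))ᵀ) * Mᵀ := by
        show exp ((t:ℂ) • M) * (M * C + C * Mᵀ) * (exp ((t:ℂ) • M))ᵀ = _
        rw [mul_add, add_mul, ← mul_assoc, hEM t]
        congr 1
        · rw [mul_assoc, mul_assoc, mul_assoc]
        · rw [mul_assoc, mul_assoc, hMt, ← mul_assoc, ← mul_assoc]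
      rw [this, Matrix.add_apply]
    simp only [hpt]
    rw [intervalIntegral.integral_add
      (((continuous_const.matrix_mul hFc).matrix_elem i j).intervalIntegrable _ _)
      (((hFc.matrix_mul continuous_const).matrix_elem i j).intervalIntegrable _ _)]
    have hz1 : (∫ t in (0:ℝ)..T,
        (M * (exp ((t:ℂ) • M) * C * (exp ((t:ℂ) • M))ᵀ)) i j) = 0 := by
      have hmul : ∀ t : ℝ, (M * (exp ((t:ℂ) • M) * C * (exp ((t:ℂ) • M))ᵀ)) i j
          = ∑ k, M i k * (exp ((t:ℂ) • M) * C * (exp ((t:ℂ) • M))ᵀ) k j :=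
        fun t => Matrix.mul_apply
      simp only [hmul]
      rw [intervalIntegral.integral_finset_sum (fun k _ =>
        (show Continuous fun t : ℝ => M i k * (exp ((t:ℂ) • M) * C * (exp ((t:ℂ) • M))ᵀ) k j from
          continuous_const.mul (hFc.matrix_elem k j)).intervalIntegrable _ _)]
      refine Finset.sum_eq_zero fun k _ => ?_
      rw [intervalIntegral.integral_const_mul, hC k j, mul_zero]
    have hz2 : (∫ t in (0:ℝ)..T,
        ((exp ((t:ℂ) • M) * C * (exp ((t:ℂ) • M))ᵀ) * Mᵀ) i j) = 0 := by
      have hmul : ∀ t : ℝ, ((exp ((t:ℂ) • M) * C * (exp ((t:ℂ) • M))ᵀ) * Mᵀ) i j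
          = ∑ k, (exp ((t:ℂ) • M) * C * (exp ((t:ℂ) • M))ᵀ) i k * Mᵀ k j :=
        fun t => Matrix.mul_apply
      simp only [hmul]
      rw [intervalIntegral.integral_finset_sum (fun k _ =>
        (show Continuous fun t : ℝ => (exp ((t:ℂ) • M) * C * (exp ((t:ℂ) • M))ᵀ) i k * Mᵀ k j from
          (hFc.matrix_elem i k).mul continuous_const).intervalIntegrable _ _)]
      refine Finset.sum_eq_zero fun k _ => ?_
      rw [intervalIntegral.integral_mul_const, hC i k, zero_mul]
    rw [hz1, hz2, add_zero]
  -- eigenvector of the restricted operator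
  obtain ⟨ν, hν⟩ := Module.End.exists_eigenvalue (Lfull.restrict hLK)
  obtain ⟨v, hv⟩ := hν.exists_hasEigenvector
  have hC0 : (v : Matrix (Fin n) (Fin n) ℂ) ≠ 0 := fun h => hv.2 (Subtype.ext h)
  have hCK : (v : Matrix (Fin n) (Fin n) ℂ) ∈ K := v.2
  have hCeig : M * (v : Matrix (Fin n) (Fin n) ℂ) + (v : Matrix (Fin n) (Fin n) ℂ) * Mᵀ
      = ν • (v : Matrix (Fin n) (Fin n) ℂ) := by
    have h1 := hv.apply_eq_smul
    have h2 := congrArg (Subtype.val) h1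
    simpa [LinearMap.restrict_apply, Lfull] using h2
  -- the scalar integral vanishes
  obtain ⟨i, j, hij⟩ : ∃ i j, (v : Matrix (Fin n) (Fin n) ℂ) i j ≠ 0 := by
    by_contra h
    push_neg at h
    exact hC0 (by ext i j; simpa using h i j)
  have hI : (∫ t in (0:ℝ)..T, Complex.exp (ν * (t:ℂ))) = 0 := by
    have h1 := hCK i j
    have h2 : ∀ t : ℝ, (exp ((t:ℂ) • M) * (v : Matrix (Fin n) (Fin n) ℂ)
        * (exp ((t:ℂ) • M))ᵀ) i j
        = Complex.exp (ν * (t:ℂ)) * (v : Matrix (Fin n) (Fin n) ℂ) i j := by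
      intro t
      rw [conj_eig M _ ν hCeig, Matrix.smul_apply, smul_eq_mul, mul_comm (t:ℂ) ν]
    simp only [h2] at h1
    rw [intervalIntegral.integral_mul_const] at h1
    rcases mul_eq_zero.mp h1 with h | h
    · exact h
    · exact absurd h hij
  have hTC : (T : ℂ) ≠ 0 := by
    exact_mod_cast hT.ne'
  have hν0 : ν ≠ 0 := by
    intro h
    rw [h] at hI
    simp only [zero_mul, Complex.exp_zero, intervalIntegral.integral_const, sub_zero,
      Complex.real_smul, mul_one] at hI
    exact hTC hI
  rw [integral_exp_mul_complex hν0] at hI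
  rw [_root_.div_eq_zero_iff] at hI
  rcases hI with hI | hI
  · rw [sub_eq_zero] at hI
    rw [show ((0:ℝ):ℂ) = 0 from rfl, mul_zero, Complex.exp_zero] at hI
    obtain ⟨k, hk⟩ := Complex.exp_eq_one_iff.mp hI
    have hk0 : k ≠ 0 := by
      rintro rfl
      apply hν0
      have : ν * (T:ℂ) = 0 := by rw [hk]; simp
      rcases mul_eq_zero.mp this with h | h
      · exact h
      · exact absurd h hTC
    obtain ⟨lam, mu, hlam, hmu, hsum⟩ := sylvester_spectrum M _ ν hC0 hCeig
    refine heig lam mu hlam hmu k hk0 ?_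
    rw [hsum]
    have hν : ν = (k : ℂ) * (2 * (Real.pi : ℂ) * Complex.I) / (T : ℂ) :=
      (eq_div_iff hTC).mpr hk
    rw [hν]
    push_cast
    field_simp
  · exact hν0 hI

end Main
end

section
/- Let W₁,…,W_n ∈ ℂ^{N×N} be Hermitian positive semidefinite matrices that are linearly independent over ℝ, and for p ∈ ℝⁿ set W(p) = ∑_{i=1}^n p_i W_i. If the feasible set {p ∈ Δ : W(p) is positive definite} is nonempty, then the minimization problem: minimize −log det W(p) subject to p ∈ Δ and W(p) positive definite, admits a unique optimal solution. -/
open Matrix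
open scoped ComplexOrder

variable {N : ℕ}

lemma real_smul_mat (c : ℝ) (A : Matrix (Fin N) (Fin N) ℂ) : c • A = (c : ℂ) • A := by
  ext i j; simp [Complex.real_smul]

lemma psd_smul {A : Matrix (Fin N) (Fin N) ℂ} (hA : A.PosSemidef) {c : ℝ} (hc : 0 ≤ c) :
    (c • A).PosSemidef := by
  rw [real_smul_mat]
  refine ⟨?_, fun x => ?_⟩
  · unfold Matrix.IsHermitian
    rw [conjTranspose_smul, hA.1.eq]
    congr 1
    simp [RCLike.star_def]
  · exact (hA.smul (show (0:ℂ) ≤ (c:ℂ) by simpa using hc)).2 x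

lemma pd_smul {A : Matrix (Fin N) (Fin N) ℂ} (hA : A.PosDef) {c : ℝ} (hc : 0 < c) :
    (c • A).PosDef := by
  rw [real_smul_mat]
  refine ⟨?_, fun x hx => ?_⟩
  · unfold Matrix.IsHermitian
    rw [conjTranspose_smul, hA.1.eq]
    congr 1
    simp [RCLike.star_def]
  · exact (hA.smul (show (0:ℂ) < (c:ℂ) by simpa using hc)).2 hx

lemma psd_sum {n : ℕ} (f : Fin n → Matrix (Fin N) (Fin N) ℂ) (h : ∀ i, (f i).PosSemidef) :
    (∑ i, f i).PosSemidef := by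
  classical
  refine Finset.sum_induction f _ (fun a b ha hb => ha.add hb) ?_ (fun i _ => h i)
  exact Matrix.PosSemidef.zero

lemma det_re_eq_prod {A : Matrix (Fin N) (Fin N) ℂ} (hA : A.IsHermitian) :
    A.det.re = ∏ i, hA.eigenvalues i := by
  rw [hA.det_eq_prod_eigenvalues]
  norm_cast

lemma pd_conj {A B : Matrix (Fin N) (Fin N) ℂ} (hA : A.PosDef) (hB : IsUnit B) :
    (Bᴴ * A * B).PosDef := by
  refine Matrix.PosDef.of_dotProduct_mulVec_pos (isHermitian_conjTranspose_mul_mul B hA.1) fun x hx => ?_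
  have hBx : B *ᵥ x ≠ 0 := by
    intro h
    apply hx
    have h0 : B *ᵥ x = B *ᵥ 0 := by simp [h]
    exact (Matrix.mulVec_injective_iff_isUnit.mpr hB) h0
  have := hA.dotProduct_mulVec_pos hBx
  simpa only [star_mulVec, dotProduct_mulVec, vecMul_vecMul] using this

lemma posDef_of_psd_det {A : Matrix (Fin N) (Fin N) ℂ} (hA : A.PosSemidef)
    (h : 0 < A.det.re) : A.PosDef := by
  have hμ : ∀ i, 0 < hA.1.eigenvalues i := by
    intro i
    rcases lt_or_eq_of_le (hA.eigenvalues_nonneg i) with h' | h'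
    · exact h'
    · exfalso
      rw [det_re_eq_prod hA.1] at h
      have : (∏ j, hA.1.eigenvalues j) = 0 :=
        Finset.prod_eq_zero (Finset.mem_univ i) h'.symm
      simp [this] at h
  -- A = U * D * Uᴴ with D positive diagonal
  have hspec := hA.1.spectral_theorem
  rw [hspec]
  have hDpd : (Matrix.diagonal (RCLike.ofReal ∘ hA.1.eigenvalues) : Matrix (Fin N) (Fin N) ℂ).PosDef := by
    rw [Matrix.posDef_diagonal_iff]
    intro i
    simpa using hμ i
  have hU : IsUnit (star (hA.1.eigenvectorUnitary : Matrix (Fin N) (Fin N) ℂ)) := by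
    have h2 := (Unitary.star_mem (hA.1.eigenvectorUnitary).2)
    exact ⟨⟨star (hA.1.eigenvectorUnitary : Matrix (Fin N) (Fin N) ℂ),
      (hA.1.eigenvectorUnitary : Matrix (Fin N) (Fin N) ℂ), by simpa using h2.2, by simpa using h2.1⟩, rfl⟩
  have := pd_conj hDpd hU
  simpa [Matrix.star_eq_conjTranspose] using this

lemma det_half_one_add {M : Matrix (Fin N) (Fin N) ℂ} (hM : M.IsHermitian) :
    ((1/2:ℝ) • (1 + M)).det.re = ∏ i, (1 + hM.eigenvalues i)/2 := by
  set U := (hM.eigenvectorUnitary : Matrix (Fin N) (Fin N) ℂ) with hU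
  set D := (Matrix.diagonal (RCLike.ofReal ∘ hM.eigenvalues) : Matrix (Fin N) (Fin N) ℂ) with hD
  have hUU : U * star U = 1 := Matrix.mem_unitaryGroup_iff.mp hM.eigenvectorUnitary.2
  have key : (1/2:ℝ) • (1 + M) = U * ((1/2:ℝ) • (1 + D)) * star U := by
    rw [Matrix.mul_smul, Matrix.smul_mul]
    congr 1
    rw [Matrix.mul_add, Matrix.add_mul, Matrix.mul_one, hUU]
    congr 1
    exact hM.spectral_theorem
  rw [key, Matrix.det_mul_right_comm, hUU, one_mul]
  rw [real_smul_mat, Matrix.det_smul, ← Matrix.diagonal_one, hD, Matrix.diagonal_add,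
    Matrix.det_diagonal]
  have : (∏ i, ((1:ℂ) + (RCLike.ofReal ∘ hM.eigenvalues) i))
      = ((∏ i, (1 + hM.eigenvalues i) : ℝ) : ℂ) := by
    push_cast
    rfl
  rw [this, ← Complex.ofReal_pow, ← Complex.ofReal_mul, Complex.ofReal_re,
    Fintype.card_fin, Finset.prod_div_distrib]
  simp [Finset.card_univ]
  ring

lemma pd_det_real {P : Matrix (Fin N) (Fin N) ℂ} (hP : P.PosDef) : P.det = (P.det.re : ℂ) := by
  have h := hP.det_pos
  rw [Complex.lt_def] at h
  apply Complex.ext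
  · simp
  · simp [← h.2]

lemma pd_det_re_pos {P : Matrix (Fin N) (Fin N) ℂ} (hP : P.PosDef) : 0 < P.det.re := by
  have h := hP.det_pos
  rw [Complex.lt_def] at h
  simpa using h.1

lemma log_half_le {t : ℝ} (ht : 0 < t) : 1/2 * Real.log t ≤ Real.log ((1+t)/2) := by
  rcases eq_or_ne t 1 with rfl | hne
  · norm_num
  · have h := strictConcaveOn_log_Ioi.2 (Set.mem_Ioi.mpr one_pos) (Set.mem_Ioi.mpr ht)
      (Ne.symm hne) (show (0:ℝ) < 1/2 by norm_num) (show (0:ℝ) < 1/2 by norm_num) (by norm_num)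
    have harg : (1/2:ℝ) • (1:ℝ) + (1/2:ℝ) • t = (1+t)/2 := by
      simp [smul_eq_mul]; ring
    rw [harg] at h
    simp only [smul_eq_mul, Real.log_one, mul_zero, zero_add] at h
    linarith

lemma log_half_lt {t : ℝ} (ht : 0 < t) (hne : t ≠ 1) :
    1/2 * Real.log t < Real.log ((1+t)/2) := by
  have h := strictConcaveOn_log_Ioi.2 (Set.mem_Ioi.mpr one_pos) (Set.mem_Ioi.mpr ht)
    (Ne.symm hne) (show (0:ℝ) < 1/2 by norm_num) (show (0:ℝ) < 1/2 by norm_num) (by norm_num)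
  have harg : (1/2:ℝ) • (1:ℝ) + (1/2:ℝ) • t = (1+t)/2 := by
    simp [smul_eq_mul]; ring
  rw [harg] at h
  simp only [smul_eq_mul, Real.log_one, mul_zero, zero_add] at h
  linarith

lemma logdet_midpoint {A B : Matrix (Fin N) (Fin N) ℂ} (hA : A.PosDef) (hB : B.PosDef)
    (hAB : A ≠ B) :
    (Real.log A.det.re + Real.log B.det.re) / 2 < Real.log (((1/2:ℝ) • A + (1/2:ℝ) • B).det.re) := by
  classical
  obtain ⟨S, hS, hSS⟩ : ∃ S : Matrix (Fin N) (Fin N) ℂ, S.PosSemidef ∧ S * S = A := by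
    open scoped MatrixOrder in
    exact ⟨CFC.sqrt A, (CFC.sqrt_nonneg A).posSemidef, CFC.sqrt_mul_sqrt_self A hA.posSemidef.nonneg⟩
  set r := ∏ i, hS.1.eigenvalues i with hrdef
  have hdetS : S.det = (r : ℂ) := by rw [hS.1.det_eq_prod_eigenvalues]; norm_cast
  have hApos : 0 < A.det.re := pd_det_re_pos hA
  have hBpos : 0 < B.det.re := pd_det_re_pos hB
  have hr2 : r * r = A.det.re := by
    have h1 : S.det * S.det = A.det := by rw [← Matrix.det_mul, hSS]
    rw [hdetS, ← Complex.ofReal_mul] at h1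
    have := congrArg Complex.re h1
    simpa using this
  have hr0 : 0 ≤ r := Finset.prod_nonneg (fun i _ => hS.eigenvalues_nonneg i)
  have hrpos : 0 < r := by
    rcases hr0.lt_or_eq with h | h
    · exact h
    · exfalso; rw [← h] at hr2; simp at hr2; linarith
  have hSpd : S.PosDef := posDef_of_psd_det hS (by rw [det_re_eq_prod hS.1]; exact hrpos)
  have hSdetu : IsUnit S.det := hSpd.det_pos.ne'.isUnit
  have hSinv : S * S⁻¹ = 1 := Matrix.mul_nonsing_inv _ hSdetu
  have hinvS : S⁻¹ * S = 1 := Matrix.nonsing_inv_mul _ hSdetu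
  set M := S⁻¹ * B * S⁻¹ with hMdef
  have hMpd : M.PosDef := by
    have h := pd_conj hB hSpd.inv.isUnit
    rw [hMdef]
    have : (S⁻¹)ᴴ = S⁻¹ := hSpd.1.inv
    rwa [this] at h
  have hSMS : S * M * S = B := by
    have h1 : S * (S⁻¹ * B * S⁻¹) * S = S * (S⁻¹ * (B * (S⁻¹ * S))) := by
      simp only [Matrix.mul_assoc]
    rw [hMdef, h1, hinvS, Matrix.mul_one, ← Matrix.mul_assoc, hSinv, Matrix.one_mul]
  have hMne1 : M ≠ 1 := by
    intro h
    apply hAB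
    rw [← hSS, ← hSMS, h, Matrix.mul_one]
  have hμpos : ∀ i, 0 < hMpd.1.eigenvalues i := hMpd.eigenvalues_pos
  have hm : M.det.re = ∏ i, hMpd.1.eigenvalues i := det_re_eq_prod hMpd.1
  have hmpos : 0 < M.det.re := pd_det_re_pos hMpd
  set X := (1/2:ℝ) • ((1 : Matrix (Fin N) (Fin N) ℂ) + M) with hXdef
  have hXpd : X.PosDef := pd_smul (Matrix.PosDef.one.add hMpd) (by norm_num)
  have hx : X.det.re = ∏ i, (1 + hMpd.1.eigenvalues i)/2 := det_half_one_add hMpd.1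
  have hxpos : 0 < X.det.re := pd_det_re_pos hXpd
  have hmid : (1/2:ℝ) • A + (1/2:ℝ) • B = S * X * S := by
    rw [hXdef, Matrix.mul_smul, Matrix.smul_mul, Matrix.mul_add, Matrix.add_mul,
      Matrix.mul_one, hSS, hSMS, smul_add]
  have hmiddet : ((1/2:ℝ) • A + (1/2:ℝ) • B).det.re = A.det.re * X.det.re := by
    rw [hmid]
    have : (S * X * S).det = ((r * X.det.re * r : ℝ) : ℂ) := by
      rw [Matrix.det_mul, Matrix.det_mul, hdetS, pd_det_real hXpd]
      push_cast; simp
    rw [this, Complex.ofReal_re]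
    rw [← hr2]; ring
  have hBdet : B.det.re = A.det.re * M.det.re := by
    have : B.det = ((r * M.det.re * r : ℝ) : ℂ) := by
      rw [← hSMS, Matrix.det_mul, Matrix.det_mul, hdetS, pd_det_real hMpd]
      push_cast; simp
    rw [this, Complex.ofReal_re, ← hr2]; ring
  -- exists eigenvalue ≠ 1
  have hex : ∃ j, hMpd.1.eigenvalues j ≠ 1 := by
    by_contra h
    push_neg at h
    apply hMne1
    have hD : (Matrix.diagonal (RCLike.ofReal ∘ hMpd.1.eigenvalues) : Matrix (Fin N) (Fin N) ℂ) = 1 := by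
      have : (RCLike.ofReal ∘ hMpd.1.eigenvalues : Fin N → ℂ) = fun _ => 1 := by
        funext i; simp [h i]
      rw [this, ← Matrix.diagonal_one]
    have hspec := hMpd.1.spectral_theorem
    rw [hD, map_one] at hspec
    exact hspec
  -- key sum inequality
  have hsum : (1/2) * Real.log M.det.re < Real.log X.det.re := by
    rw [hm, hx, Real.log_prod (fun i _ => (hμpos i).ne'),
      Real.log_prod (fun i _ => ne_of_gt (div_pos (by linarith [hμpos i]) two_pos)), Finset.mul_sum]
    obtain ⟨j, hj⟩ := hex
    exact Finset.sum_lt_sum (fun i _ => log_half_le (hμpos i))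
      ⟨j, Finset.mem_univ j, log_half_lt (hμpos j) hj⟩
  rw [hmiddet, hBdet, Real.log_mul hApos.ne' hxpos.ne', Real.log_mul hApos.ne' hmpos.ne']
  linarith

theorem stmt6 {n N : ℕ} (W : Fin n → Matrix (Fin N) (Fin N) ℂ)
    (hpsd : ∀ i, (W i).PosSemidef)
    (hli : LinearIndependent ℝ W)
    (hfeas : ∃ p : Fin n → ℝ, (∀ i, 0 ≤ p i) ∧ ∑ i, p i = 1 ∧
      (∑ i, p i • W i).PosDef) :
    ∃! p : Fin n → ℝ,
      ((∀ i, 0 ≤ p i) ∧ ∑ i, p i = 1 ∧ (∑ i, p i • W i).PosDef) ∧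
      ∀ q : Fin n → ℝ, ((∀ i, 0 ≤ q i) ∧ ∑ i, q i = 1 ∧ (∑ i, q i • W i).PosDef) →
        -Real.log (∑ i, p i • W i).det.re ≤ -Real.log (∑ i, q i • W i).det.re := by
  classical
  obtain ⟨p₀, hp₀n, hp₀s, hp₀pd⟩ := hfeas
  let Wsum : (Fin n → ℝ) → Matrix (Fin N) (Fin N) ℂ := fun p => ∑ i, p i • W i
  let f : (Fin n → ℝ) → ℝ := fun p => (Wsum p).det.re
  have hfeasPSD : ∀ p : Fin n → ℝ, (∀ i, 0 ≤ p i) → (Wsum p).PosSemidef := fun p hp =>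
    psd_sum _ (fun i => psd_smul (hpsd i) (hp i))
  have hcont : Continuous f := by
    apply Complex.continuous_re.comp
    apply Continuous.matrix_det
    apply continuous_finset_sum
    intro i _
    exact (continuous_apply i).smul continuous_const
  set ε := f p₀ with hεdef
  have hεpos : 0 < ε := pd_det_re_pos hp₀pd
  set K := {p : Fin n → ℝ | (∀ i, 0 ≤ p i) ∧ ∑ i, p i = 1 ∧ ε ≤ f p} with hKdef
  have hKeq : K = stdSimplex ℝ (Fin n) ∩ {p | ε ≤ f p} := by
    ext p
    simp only [hKdef, Set.mem_setOf_eq, Set.mem_inter_iff, stdSimplex, and_assoc]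
  have hKclosed : IsClosed K := by
    rw [hKeq]
    exact (isClosed_stdSimplex _ _).inter (isClosed_le continuous_const hcont)
  have hKcpt : IsCompact K := by
    apply IsCompact.of_isClosed_subset (isCompact_stdSimplex ℝ (Fin n)) hKclosed
    rw [hKeq]; exact Set.inter_subset_left
  have hKne : p₀ ∈ K := ⟨hp₀n, hp₀s, le_refl _⟩
  have hg : ContinuousOn (fun p => -Real.log (f p)) K := by
    apply ContinuousOn.neg
    intro p hp
    exact ((Real.continuousAt_log (lt_of_lt_of_le hεpos hp.2.2).ne').comp
      hcont.continuousAt).continuousWithinAt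
  obtain ⟨p, hpK, hpmin⟩ := hKcpt.exists_isMinOn ⟨p₀, hKne⟩ hg
  have hppd : (Wsum p).PosDef :=
    posDef_of_psd_det (hfeasPSD p hpK.1) (lt_of_lt_of_le hεpos hpK.2.2)
  have hfeasp : (∀ i, 0 ≤ p i) ∧ ∑ i, p i = 1 ∧ (Wsum p).PosDef := ⟨hpK.1, hpK.2.1, hppd⟩
  have hmin : ∀ q, ((∀ i, 0 ≤ q i) ∧ ∑ i, q i = 1 ∧ (Wsum q).PosDef) →
      -Real.log (f p) ≤ -Real.log (f q) := by
    rintro q ⟨hqn, hqs, hqpd⟩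
    by_cases hq : ε ≤ f q
    · exact isMinOn_iff.mp hpmin q ⟨hqn, hqs, hq⟩
    · push_neg at hq
      have h1 : -Real.log (f p) ≤ -Real.log ε := isMinOn_iff.mp hpmin p₀ hKne
      have h2 : Real.log (f q) < Real.log ε := Real.log_lt_log (pd_det_re_pos hqpd) hq
      linarith
  refine ⟨p, ⟨hfeasp, hmin⟩, ?_⟩
  rintro q ⟨hqfeas, hqmin⟩
  by_contra hne
  have heq : Real.log (f q) = Real.log (f p) := by
    have h1 := hmin q hqfeas
    have h2 := hqmin p hfeasp
    have h1' : -Real.log (f p) ≤ -Real.log (f q) := h1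
    have h2' : -Real.log (f q) ≤ -Real.log (f p) := h2
    linarith
  have hABne : Wsum p ≠ Wsum q := by
    intro h
    apply hne
    have hz : ∑ i, (q i - p i) • W i = 0 := by
      simp only [sub_smul]
      rw [Finset.sum_sub_distrib]
      have : (∑ i, q i • W i) = ∑ i, p i • W i := h.symm
      rw [this, sub_self]
    have hcoef := Fintype.linearIndependent_iff.mp hli (fun i => q i - p i) hz
    funext i
    have := hcoef i
    have : q i - p i = 0 := this
    linarith
  set m : Fin n → ℝ := fun i => (p i + q i)/2 with hmdef
  have hmW : Wsum m = (1/2:ℝ) • Wsum p + (1/2:ℝ) • Wsum q := by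
    show (∑ i, m i • W i) = (1/2:ℝ) • ∑ i, p i • W i + (1/2:ℝ) • ∑ i, q i • W i
    rw [Finset.smul_sum, Finset.smul_sum, ← Finset.sum_add_distrib]
    apply Finset.sum_congr rfl
    intro i _
    rw [smul_smul, smul_smul, ← add_smul]
    congr 1
    simp [hmdef]
    ring
  have hqpd : (Wsum q).PosDef := hqfeas.2.2
  have hmfeas : (∀ i, 0 ≤ m i) ∧ ∑ i, m i = 1 ∧ (Wsum m).PosDef := by
    refine ⟨fun i => ?_, ?_, ?_⟩
    · have h1 := hfeasp.1 i
      have h2 := hqfeas.1 i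
      simp only [hmdef]
      linarith
    · simp only [hmdef]
      rw [← Finset.sum_div]
      rw [Finset.sum_add_distrib, hfeasp.2.1, hqfeas.2.1]
      norm_num
    · rw [hmW]
      exact (pd_smul hppd one_half_pos).add (pd_smul hqpd one_half_pos)
  have hstrict := logdet_midpoint hppd hqpd hABne
  have hle := hmin m hmfeas
  have hfm : f m = ((1/2:ℝ) • Wsum p + (1/2:ℝ) • Wsum q).det.re := by
    show (Wsum m).det.re = _
    rw [hmW]
  rw [← hfm] at hstrict
  have : Real.log (f m) ≤ Real.log (f p) := by linarith
  have : (Real.log (f p) + Real.log (f q))/2 < Real.log (f p) := lt_of_lt_of_le hstrict this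
  linarith [heq]
end

section
/- Let C₁ ∈ ℂ^{n₁×n₁} have all eigenvalues with strictly negative real part, let C₂ ∈ ℂ^{n₂×n₂} have all eigenvalues with strictly positive real part, and let B ∈ ℂ^{n₁×n₂}. Then (∫₀^T e^{C₁t} B e^{C₂*t} dt) · e^{−C₂*T} → 0 (in any matrix norm, equivalently entrywise) as T → ∞. -/
open Matrix Filter intervalIntegral

/-- Matrix exponential `e^{tC}` of a complex matrix. -/
noncomputable def cMatExp {k : ℕ} (C : Matrix (Fin k) (Fin k) ℂ) (t : ℝ) :
    Matrix (Fin k) (Fin k) ℂ :=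
  NormedSpace.exp ((t : ℂ) • C)

namespace Stmt12Aux

/-- Elementary: `t ^ n ≤ (n! / ε ^ n) * exp (ε t)` for `t ≥ 0`, `ε > 0`. -/
lemma pow_le_exp_aux {ε t : ℝ} (hε : 0 < ε) (ht : 0 ≤ t) (n : ℕ) :
    t ^ n ≤ (((Nat.factorial n) : ℝ) / ε ^ n) * Real.exp (ε * t) := by
  have h := Real.pow_div_factorial_le_exp (x := ε * t) (by positivity) n
  have hεn : (0:ℝ) < ε ^ n := by positivity
  have hfac : (0:ℝ) < ((Nat.factorial n) : ℝ) := by positivity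
  rw [div_le_iff₀ hfac] at h
  rw [mul_pow] at h
  calc t ^ n = (ε ^ n * t ^ n) / ε ^ n := by field_simp
    _ ≤ (Real.exp (ε * t) * ((Nat.factorial n) : ℝ)) / ε ^ n := by gcongr
    _ = (((Nat.factorial n) : ℝ) / ε ^ n) * Real.exp (ε * t) := by ring

/-- Decay of `exp (t A) *ᵥ x` when all spectrum points have real part `< -α`. -/
lemma vec_decay {k : ℕ} (A : Matrix (Fin k) (Fin k) ℂ) {α : ℝ}
    (hspec : ∀ μ ∈ spectrum ℂ A, μ.re < -α) (x : Fin k → ℂ) :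
    ∃ K : ℝ, 0 ≤ K ∧ ∀ t : ℝ, 0 ≤ t →
      ‖(cMatExp A t) *ᵥ x‖ ≤ K * Real.exp (-α * t) := by
  letI : SeminormedRing (Matrix (Fin k) (Fin k) ℂ) := Matrix.linftyOpSemiNormedRing
  letI : NormedRing (Matrix (Fin k) (Fin k) ℂ) := Matrix.linftyOpNormedRing
  letI : NormedAlgebra ℂ (Matrix (Fin k) (Fin k) ℂ) := Matrix.linftyOpNormedAlgebra
  set f : Module.End ℂ (Fin k → ℂ) := Matrix.toLinAlgEquiv' A with hf
  have hx : x ∈ ⨆ μ : ℂ, f.maxGenEigenspace μ := by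
    rw [Module.End.iSup_maxGenEigenspace_eq_top]; exact Submodule.mem_top
  refine Submodule.iSup_induction (motive := fun x => ∃ K : ℝ, 0 ≤ K ∧ ∀ t : ℝ, 0 ≤ t →
      ‖(cMatExp A t) *ᵥ x‖ ≤ K * Real.exp (-α * t)) _ hx ?_ ?_ ?_
  · -- main case : x in a generalized eigenspace
    intro μ x hxμ
    rcases eq_or_ne x 0 with rfl | hx0
    · exact ⟨0, le_rfl, fun t ht => by simp [Matrix.mulVec_zero]⟩
    obtain ⟨m, hm⟩ := (Module.End.mem_maxGenEigenspace f μ x).mp hxμ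
    have hμspec : μ ∈ spectrum ℂ A := by
      rw [← AlgEquiv.spectrum_eq (Matrix.toLinAlgEquiv' (R := ℂ) (n := Fin k)) A,
        ← Module.End.hasEigenvalue_iff_mem_spectrum]
      refine Module.End.hasEigenvalue_of_hasGenEigenvalue (k := m) ?_
      rw [Module.End.hasGenEigenvalue_iff]
      intro hbot
      have hmem : x ∈ f.genEigenspace μ (m : ℕ∞) :=
        Module.End.mem_genEigenspace.mpr ⟨m, le_rfl, LinearMap.mem_ker.mpr hm⟩
      rw [hbot] at hmem
      exact hx0 (Submodule.mem_bot _ |>.mp hmem)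
    have hre : μ.re < -α := hspec μ hμspec
    set ε : ℝ := -μ.re - α with hεdef
    have hε0 : 0 < ε := by simp only [hεdef]; linarith
    set N : Matrix (Fin k) (Fin k) ℂ := A - μ • 1 with hN
    have hkey : ∀ p : ℕ, ((f - μ • 1) ^ p) x = (N ^ p) *ᵥ x := by
      intro p
      have h1 : f - μ • (1 : Module.End ℂ (Fin k → ℂ)) = Matrix.toLinAlgEquiv' N := by
        rw [hN, map_sub, _root_.map_smul, _root_.map_one, hf]
      rw [h1, ← map_pow, Matrix.toLinAlgEquiv'_apply]
    have hNx : ∀ n : ℕ, m ≤ n → (N ^ n) *ᵥ x = 0 := by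
      intro n hn
      have h2 : (N ^ m) *ᵥ x = 0 := by rw [← hkey]; exact hm
      have h3 : N ^ n = N ^ (n - m) * N ^ m := by
        rw [← pow_add]; congr 1; omega
      rw [h3, ← Matrix.mulVec_mulVec, h2, Matrix.mulVec_zero]
    refine ⟨∑ n ∈ Finset.range m, (ε⁻¹) ^ n * ‖(N ^ n) *ᵥ x‖, ?_, ?_⟩
    · exact Finset.sum_nonneg fun n _ => by positivity
    intro t ht
    -- split the exponential
    have hsplit : cMatExp A t = Complex.exp ((t : ℂ) * μ) • NormedSpace.exp ((t : ℂ) • N) := by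
      have h1 : (t : ℂ) • A = ((t : ℂ) * μ) • (1 : Matrix (Fin k) (Fin k) ℂ) + (t : ℂ) • N := by
        rw [hN]; module
      have hcomm : Commute (((t : ℂ) * μ) • (1 : Matrix (Fin k) (Fin k) ℂ)) ((t : ℂ) • N) :=
        (Commute.one_left _).smul_left _
      rw [cMatExp, h1, Matrix.exp_add_of_commute _ _ hcomm]
      have h2 : NormedSpace.exp (((t : ℂ) * μ) • (1 : Matrix (Fin k) (Fin k) ℂ))
          = Complex.exp ((t : ℂ) * μ) • (1 : Matrix (Fin k) (Fin k) ℂ) := by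
        rw [← Algebra.algebraMap_eq_smul_one, Complex.exp_eq_exp_ℂ, ← Algebra.algebraMap_eq_smul_one]
        exact (NormedSpace.algebraMap_exp_comm _).symm
      rw [h2, smul_mul_assoc, one_mul]
    -- finite expansion of exp (t N) *ᵥ x
    have hexpN : (NormedSpace.exp ((t : ℂ) • N)) *ᵥ x
        = ∑ n ∈ Finset.range m, ((((Nat.factorial n) : ℂ))⁻¹ * (t : ℂ) ^ n) • ((N ^ n) *ᵥ x) := by
      classical
      let L0 : Matrix (Fin k) (Fin k) ℂ →ₗ[ℂ] (Fin k → ℂ) :=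
        { toFun := fun M => M *ᵥ x
          map_add' := fun M₁ M₂ => Matrix.add_mulVec M₁ M₂ x
          map_smul' := fun c M => Matrix.smul_mulVec c M x }
      let L := LinearMap.toContinuousLinearMap L0
      have hLapp : ∀ M : Matrix (Fin k) (Fin k) ℂ, L M = M *ᵥ x := fun _ => rfl
      have h1 : (NormedSpace.exp ((t : ℂ) • N)) *ᵥ x
          = ∑' n : ℕ, L ((((Nat.factorial n):ℂ))⁻¹ • ((t : ℂ) • N) ^ n) := by
        rw [← hLapp, NormedSpace.exp_eq_tsum (𝕂 := ℂ)]
        exact L.map_tsum (NormedSpace.expSeries_summable' (𝕂 := ℂ) ((t : ℂ) • N))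
      rw [h1]
      have h2 : ∀ n : ℕ, L ((((Nat.factorial n):ℂ))⁻¹ • ((t : ℂ) • N) ^ n)
          = ((((Nat.factorial n):ℂ))⁻¹ * (t : ℂ) ^ n) • ((N ^ n) *ᵥ x) := by
        intro n
        rw [hLapp, smul_pow, smul_smul, ← Matrix.smul_mulVec]
      have h3 : ∀ n ∉ Finset.range m, L ((((Nat.factorial n):ℂ))⁻¹ • ((t : ℂ) • N) ^ n) = 0 := by
        intro n hn
        rw [h2, hNx n (by simpa using hn), smul_zero]
      rw [tsum_eq_sum h3]
      exact Finset.sum_congr rfl fun n _ => h2 n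
    rw [hsplit, Matrix.smul_mulVec, hexpN, norm_smul]
    have hnormexp : ‖Complex.exp ((t : ℂ) * μ)‖ = Real.exp (t * μ.re) := by
      rw [Complex.norm_exp]
      congr 1
      simp [Complex.mul_re]
    rw [hnormexp]
    calc Real.exp (t * μ.re) * ‖∑ n ∈ Finset.range m,
          ((((Nat.factorial n):ℂ))⁻¹ * (t : ℂ) ^ n) • ((N ^ n) *ᵥ x)‖
        ≤ Real.exp (t * μ.re) * ∑ n ∈ Finset.range m,
          (((Nat.factorial n) : ℝ))⁻¹ * t ^ n * ‖(N ^ n) *ᵥ x‖ := by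
          refine mul_le_mul_of_nonneg_left ?_ (Real.exp_nonneg _)
          refine (norm_sum_le _ _).trans (Finset.sum_le_sum fun n _ => ?_)
          rw [norm_smul, norm_mul, norm_inv, norm_pow]
          simp only [Complex.norm_natCast, Complex.norm_real, Real.norm_eq_abs]
          rw [abs_of_nonneg ht]
      _ = ∑ n ∈ Finset.range m,
          (((Nat.factorial n) : ℝ))⁻¹ * (t ^ n * Real.exp (t * μ.re)) * ‖(N ^ n) *ᵥ x‖ := by
          rw [Finset.mul_sum]; exact Finset.sum_congr rfl fun n _ => by ring
      _ ≤ ∑ n ∈ Finset.range m, (ε⁻¹) ^ n * ‖(N ^ n) *ᵥ x‖ * Real.exp (-α * t) := by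
          refine Finset.sum_le_sum fun n _ => ?_
          have hb : t ^ n * Real.exp (t * μ.re)
              ≤ (((Nat.factorial n) : ℝ) / ε ^ n) * Real.exp (-α * t) := by
            have h4 : t * μ.re = -α * t + (-(ε * t)) := by
              simp only [hεdef]; ring
            rw [h4, Real.exp_add, ← mul_assoc]
            rw [mul_comm (t ^ n)]
            rw [mul_assoc, mul_comm (Real.exp (-α * t))]
            refine mul_le_mul_of_nonneg_right ?_ (Real.exp_nonneg _)
            have := pow_le_exp_aux hε0 ht n
            calc t ^ n * Real.exp (-(ε * t))
                ≤ ((((Nat.factorial n) : ℝ) / ε ^ n) * Real.exp (ε * t)) * Real.exp (-(ε * t)) := by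
                  exact mul_le_mul_of_nonneg_right this (Real.exp_nonneg _)
              _ = (((Nat.factorial n) : ℝ) / ε ^ n) * Real.exp (ε * t + -(ε * t)) := by
                  rw [mul_assoc, ← Real.exp_add]
              _ = ((Nat.factorial n) : ℝ) / ε ^ n := by simp
          have hfac : (0:ℝ) < ((Nat.factorial n) : ℝ) := by positivity
          calc (((Nat.factorial n) : ℝ))⁻¹ * (t ^ n * Real.exp (t * μ.re)) * ‖(N ^ n) *ᵥ x‖
              ≤ (((Nat.factorial n) : ℝ))⁻¹ * ((((Nat.factorial n) : ℝ) / ε ^ n) * Real.exp (-α * t)) * ‖(N ^ n) *ᵥ x‖ := by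
                refine mul_le_mul_of_nonneg_right ?_ (norm_nonneg _)
                exact mul_le_mul_of_nonneg_left hb (by positivity)
            _ = (ε⁻¹) ^ n * ‖(N ^ n) *ᵥ x‖ * Real.exp (-α * t) := by
                field_simp
                rw [one_div, inv_pow, mul_comm (ε ^ n), mul_assoc, mul_inv_cancel₀ (pow_ne_zero _ hε0.ne'), mul_one]
      _ = (∑ n ∈ Finset.range m, (ε⁻¹) ^ n * ‖(N ^ n) *ᵥ x‖) * Real.exp (-α * t) := by
          rw [Finset.sum_mul]
  · -- zero case
    exact ⟨0, le_rfl, fun t ht => by simp [Matrix.mulVec_zero]⟩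
  · -- additive case
    rintro y z ⟨K₁, hK₁0, hK₁⟩ ⟨K₂, hK₂0, hK₂⟩
    refine ⟨K₁ + K₂, by linarith, fun t ht => ?_⟩
    rw [Matrix.mulVec_add]
    calc ‖cMatExp A t *ᵥ y + cMatExp A t *ᵥ z‖
        ≤ ‖cMatExp A t *ᵥ y‖ + ‖cMatExp A t *ᵥ z‖ := norm_add_le _ _
      _ ≤ K₁ * Real.exp (-α * t) + K₂ * Real.exp (-α * t) := add_le_add (hK₁ t ht) (hK₂ t ht)
      _ = (K₁ + K₂) * Real.exp (-α * t) := by ring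

/-- Spectral gap: from strict negativity on a finite spectrum get a uniform gap. -/
lemma gap {k : ℕ} (A : Matrix (Fin k) (Fin k) ℂ)
    (h : ∀ μ ∈ spectrum ℂ A, μ.re < 0) :
    ∃ α : ℝ, 0 < α ∧ ∀ μ ∈ spectrum ℂ A, μ.re < -α := by
  classical
  have hfin : (spectrum ℂ A).Finite := A.finite_spectrum
  rcases hfin.toFinset.eq_empty_or_nonempty with he | hne
  · refine ⟨1, one_pos, fun μ hμ => absurd ?_ (Finset.notMem_empty μ)⟩
    rw [← he, Set.Finite.mem_toFinset]; exact hμ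
  · have hne' : (hfin.toFinset.image Complex.re).Nonempty := hne.image _
    obtain ⟨μ0, hμ0s, hμ0m⟩ :=
      Finset.mem_image.mp ((hfin.toFinset.image Complex.re).max'_mem hne')
    have hm0 : (hfin.toFinset.image Complex.re).max' hne' < 0 := by
      rw [← hμ0m]
      exact h μ0 (by rwa [Set.Finite.mem_toFinset] at hμ0s)
    refine ⟨-((hfin.toFinset.image Complex.re).max' hne') / 2, by linarith, fun μ hμ => ?_⟩
    have hle : μ.re ≤ (hfin.toFinset.image Complex.re).max' hne' :=
      Finset.le_max' _ _
        (Finset.mem_image.mpr ⟨μ, by rwa [Set.Finite.mem_toFinset], rfl⟩)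
    linarith

/-- Operator-type decay for the matrix exponential. -/
lemma op_decay {k : ℕ} (A : Matrix (Fin k) (Fin k) ℂ)
    (h : ∀ μ ∈ spectrum ℂ A, μ.re < 0) :
    ∃ α : ℝ, 0 < α ∧ ∃ K : ℝ, 0 ≤ K ∧ ∀ t : ℝ, 0 ≤ t → ∀ v : Fin k → ℂ,
      ‖(cMatExp A t) *ᵥ v‖ ≤ K * Real.exp (-α * t) * ‖v‖ := by
  classical
  obtain ⟨α, hα0, hspec⟩ := gap A h
  choose K hK0 hK using fun j : Fin k => vec_decay A hspec (Pi.single j 1)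
  refine ⟨α, hα0, ∑ j, K j, Finset.sum_nonneg fun j _ => hK0 j, fun t ht v => ?_⟩
  have hKt : 0 ≤ (∑ j, K j) * Real.exp (-α * t) * ‖v‖ := by
    apply mul_nonneg (mul_nonneg (Finset.sum_nonneg fun j _ => hK0 j) (Real.exp_nonneg _))
      (norm_nonneg _)
  rw [show ‖(cMatExp A t) *ᵥ v‖ = ‖fun i => ((cMatExp A t) *ᵥ v) i‖ from rfl]
  refine (pi_norm_le_iff_of_nonneg hKt).mpr fun i => ?_
  have hentry : ∀ i' j, ‖cMatExp A t i' j‖ ≤ K j * Real.exp (-α * t) := by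
    intro i' j
    have h1 : cMatExp A t i' j = ((cMatExp A t) *ᵥ Pi.single j 1) i' := by
      simp [Matrix.mulVec_single]
    rw [h1]
    exact (norm_le_pi_norm _ i').trans (hK j t ht)
  calc ‖((cMatExp A t) *ᵥ v) i‖ = ‖∑ j, cMatExp A t i j * v j‖ := by
        simp [Matrix.mulVec, dotProduct]
    _ ≤ ∑ j, ‖cMatExp A t i j * v j‖ := norm_sum_le _ _
    _ ≤ ∑ j, (K j * Real.exp (-α * t)) * ‖v‖ := by
        refine Finset.sum_le_sum fun j _ => ?_
        rw [norm_mul]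
        exact mul_le_mul (hentry i j) (norm_le_pi_norm v j) (norm_nonneg _)
          (mul_nonneg (hK0 j) (Real.exp_nonneg _))
    _ = (∑ j, K j) * Real.exp (-α * t) * ‖v‖ := by
        rw [← Finset.sum_mul, ← Finset.sum_mul]

/-- Spectrum transfer: eigenvalues of `-Aᴴ` have negative real part when those of
`A` have positive real part. -/
lemma spec_neg_ct {k : ℕ} (A : Matrix (Fin k) (Fin k) ℂ)
    (h : ∀ μ ∈ spectrum ℂ A, 0 < μ.re) :
    ∀ μ ∈ spectrum ℂ (-Aᴴ), μ.re < 0 := by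
  intro μ hμ
  have hmem : (-(starRingEnd ℂ μ)) ∈ spectrum ℂ A := by
    rw [spectrum.mem_iff] at hμ ⊢
    intro hunit
    apply hμ
    have h1 : (algebraMap ℂ (Matrix (Fin k) (Fin k) ℂ) (-(starRingEnd ℂ μ)) - A)ᴴ
        = -(algebraMap ℂ (Matrix (Fin k) (Fin k) ℂ) μ - (-Aᴴ)) := by
      rw [Matrix.conjTranspose_sub, Algebra.algebraMap_eq_smul_one,
        Algebra.algebraMap_eq_smul_one, Matrix.conjTranspose_smul, Matrix.conjTranspose_one]
      simp only [star_neg, Complex.star_def, Complex.conj_conj]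
      module
    have h2 : IsUnit ((algebraMap ℂ (Matrix (Fin k) (Fin k) ℂ) (-(starRingEnd ℂ μ)) - A)ᴴ) := by
      rw [Matrix.isUnit_iff_isUnit_det, Matrix.det_conjTranspose]
      exact ((Matrix.isUnit_iff_isUnit_det _).mp hunit).star
    rw [h1] at h2
    exact (IsUnit.neg_iff _).mp h2
  have := h _ hmem
  simp only [Complex.neg_re, Complex.conj_re] at this
  linarith

/-- Bound `‖B *ᵥ w‖` by a constant times `‖w‖`. -/
lemma mulVec_norm_le {k l : ℕ} (B : Matrix (Fin k) (Fin l) ℂ) (w : Fin l → ℂ) :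
    ‖B *ᵥ w‖ ≤ (∑ a, ∑ b, ‖B a b‖) * ‖w‖ := by
  have hC0 : 0 ≤ (∑ a, ∑ b, ‖B a b‖) :=
    Finset.sum_nonneg fun a _ => Finset.sum_nonneg fun b _ => norm_nonneg _
  refine (pi_norm_le_iff_of_nonneg (by positivity)).mpr fun a => ?_
  calc ‖(B *ᵥ w) a‖ = ‖∑ b, B a b * w b‖ := by simp [Matrix.mulVec, dotProduct]
    _ ≤ ∑ b, ‖B a b * w b‖ := norm_sum_le _ _
    _ ≤ ∑ b, ‖B a b‖ * ‖w‖ := by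
        refine Finset.sum_le_sum fun b _ => ?_
        rw [norm_mul]
        exact mul_le_mul_of_nonneg_left (norm_le_pi_norm w b) (norm_nonneg _)
    _ = (∑ b, ‖B a b‖) * ‖w‖ := by rw [← Finset.sum_mul]
    _ ≤ (∑ a, ∑ b, ‖B a b‖) * ‖w‖ := by
        refine mul_le_mul_of_nonneg_right ?_ (norm_nonneg _)
        exact Finset.single_le_sum (f := fun a => ∑ b, ‖B a b‖)
          (fun a _ => Finset.sum_nonneg fun b _ => norm_nonneg _) (Finset.mem_univ a)

lemma cMatExp_continuous {k : ℕ} (C : Matrix (Fin k) (Fin k) ℂ) :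
    Continuous (cMatExp C) := by
  letI : SeminormedRing (Matrix (Fin k) (Fin k) ℂ) := Matrix.linftyOpSemiNormedRing
  letI : NormedRing (Matrix (Fin k) (Fin k) ℂ) := Matrix.linftyOpNormedRing
  letI : NormedAlgebra ℂ (Matrix (Fin k) (Fin k) ℂ) := Matrix.linftyOpNormedAlgebra
  letI : NormedAlgebra ℚ (Matrix (Fin k) (Fin k) ℂ) := Matrix.linftyOpNormedAlgebra
  exact NormedSpace.exp_continuous.comp (Complex.continuous_ofReal.smul continuous_const)

lemma cMatExp_mul {k : ℕ} (C : Matrix (Fin k) (Fin k) ℂ) (t T : ℝ) :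
    cMatExp C t * cMatExp (-C) T = cMatExp (-C) (T - t) := by
  have hcomm : Commute ((t : ℂ) • C) ((T : ℂ) • (-C)) := by
    refine Commute.smul_left (Commute.smul_right ?_ _) _
    exact (Commute.refl C).neg_right
  have h := (Matrix.exp_add_of_commute ((t : ℂ) • C) ((T : ℂ) • (-C)) hcomm).symm
  rw [cMatExp, cMatExp, cMatExp, h]
  congr 1
  push_cast
  module

end Stmt12Aux

open Stmt12Aux in
theorem stmt12 {n₁ n₂ : ℕ}
    (C₁ : Matrix (Fin n₁) (Fin n₁) ℂ) (C₂ : Matrix (Fin n₂) (Fin n₂) ℂ)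
    (B : Matrix (Fin n₁) (Fin n₂) ℂ)
    (h₁ : ∀ mu ∈ spectrum ℂ C₁, mu.re < 0)
    (h₂ : ∀ mu ∈ spectrum ℂ C₂, 0 < mu.re) :
    ∀ i j, Filter.Tendsto
      (fun T : ℝ =>
        ((Matrix.of fun a b =>
            ∫ t in (0:ℝ)..T, (cMatExp C₁ t * B * cMatExp C₂ᴴ t) a b) *
          cMatExp (-C₂ᴴ) T) i j)
      Filter.atTop (nhds 0) := by
  intro i j
  classical
  obtain ⟨α₁, hα₁, K₁, hK₁0, hK₁⟩ := op_decay C₁ h₁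
  obtain ⟨α₂, hα₂, K₂, hK₂0, hK₂⟩ := op_decay (-C₂ᴴ) (spec_neg_ct C₂ h₂)
  set γ : ℝ := min α₁ α₂ with hγ
  have hγ0 : 0 < γ := lt_min hα₁ hα₂
  set CB : ℝ := ∑ a, ∑ b, ‖B a b‖ with hCB
  have hCB0 : 0 ≤ CB :=
    Finset.sum_nonneg fun a _ => Finset.sum_nonneg fun b _ => norm_nonneg _
  set D : ℝ := K₁ * (CB * K₂) with hD
  have hD0 : 0 ≤ D := by positivity
  -- continuity facts
  have hc1 : Continuous (cMatExp C₁) := cMatExp_continuous C₁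
  have hc2 : Continuous (cMatExp C₂ᴴ) := cMatExp_continuous C₂ᴴ
  have hcM : ∀ a b, Continuous (fun t => (cMatExp C₁ t * B * cMatExp C₂ᴴ t) a b) := by
    intro a b
    exact Continuous.matrix_elem ((hc1.matrix_mul continuous_const).matrix_mul hc2) a b
  -- rewrite the entry as a single integral
  have hG : ∀ T : ℝ,
      ((Matrix.of fun a b =>
          ∫ t in (0:ℝ)..T, (cMatExp C₁ t * B * cMatExp C₂ᴴ t) a b) *
        cMatExp (-C₂ᴴ) T) i j
      = ∫ t in (0:ℝ)..T,
          ((cMatExp C₁ t * B * cMatExp C₂ᴴ t) * cMatExp (-C₂ᴴ) T) i j := by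
    intro T
    rw [Matrix.mul_apply]
    simp only [Matrix.of_apply]
    calc ∑ b, (∫ t in (0:ℝ)..T, (cMatExp C₁ t * B * cMatExp C₂ᴴ t) i b)
            * cMatExp (-C₂ᴴ) T b j
        = ∑ b, ∫ t in (0:ℝ)..T,
            (cMatExp C₁ t * B * cMatExp C₂ᴴ t) i b * cMatExp (-C₂ᴴ) T b j := by
          refine Finset.sum_congr rfl fun b _ => ?_
          rw [intervalIntegral.integral_mul_const]
      _ = ∫ t in (0:ℝ)..T, ∑ b,
            (cMatExp C₁ t * B * cMatExp C₂ᴴ t) i b * cMatExp (-C₂ᴴ) T b j := by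
          rw [intervalIntegral.integral_finset_sum]
          intro b _
          exact ((hcM i b).mul continuous_const).intervalIntegrable 0 T
      _ = ∫ t in (0:ℝ)..T,
            ((cMatExp C₁ t * B * cMatExp C₂ᴴ t) * cMatExp (-C₂ᴴ) T) i j := by
          refine intervalIntegral.integral_congr fun t _ => ?_
          rw [Matrix.mul_apply]
  -- pointwise bound on the integrand
  have hbound : ∀ T : ℝ, 0 ≤ T → ∀ t ∈ Set.uIoc (0:ℝ) T,
      ‖((cMatExp C₁ t * B * cMatExp C₂ᴴ t) * cMatExp (-C₂ᴴ) T) i j‖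
        ≤ D * Real.exp (-γ * T) := by
    intro T hT t htmem
    rw [Set.uIoc_of_le hT] at htmem
    obtain ⟨ht0, htT⟩ := htmem
    have ht0' : (0:ℝ) ≤ t := le_of_lt ht0
    have hTt : (0:ℝ) ≤ T - t := by linarith
    have hassoc : (cMatExp C₁ t * B * cMatExp C₂ᴴ t) * cMatExp (-C₂ᴴ) T
        = cMatExp C₁ t * B * cMatExp (-C₂ᴴ) (T - t) := by
      rw [Matrix.mul_assoc, Matrix.mul_assoc, cMatExp_mul, ← Matrix.mul_assoc]
    rw [hassoc]
    set Y := cMatExp (-C₂ᴴ) (T - t) with hY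
    set w : Fin n₂ → ℂ := Y *ᵥ Pi.single j 1 with hw
    set v : Fin n₁ → ℂ := B *ᵥ w with hv
    have hentry : (cMatExp C₁ t * B * Y) i j = ((cMatExp C₁ t) *ᵥ v) i := by
      have h1 : (cMatExp C₁ t * B * Y) i j
          = ((cMatExp C₁ t * B * Y) *ᵥ Pi.single j 1) i := by
        rw [Matrix.mulVec_single]
        simp
      rw [h1, hv, hw, Matrix.mulVec_mulVec, Matrix.mulVec_mulVec, Matrix.mul_assoc]
    rw [hentry]
    have hsingle : ‖(Pi.single j 1 : Fin n₂ → ℂ)‖ ≤ 1 := by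
      rw [Pi.norm_single]
      simp
    have hwn : ‖w‖ ≤ K₂ * Real.exp (-α₂ * (T - t)) := by
      calc ‖w‖ ≤ K₂ * Real.exp (-α₂ * (T - t)) * ‖(Pi.single j 1 : Fin n₂ → ℂ)‖ :=
            hK₂ (T - t) hTt _
        _ ≤ K₂ * Real.exp (-α₂ * (T - t)) * 1 := by
            refine mul_le_mul_of_nonneg_left hsingle (by positivity)
        _ = K₂ * Real.exp (-α₂ * (T - t)) := by rw [mul_one]
    have hvn : ‖v‖ ≤ CB * (K₂ * Real.exp (-α₂ * (T - t))) := by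
      calc ‖v‖ ≤ CB * ‖w‖ := mulVec_norm_le B w
        _ ≤ CB * (K₂ * Real.exp (-α₂ * (T - t))) :=
            mul_le_mul_of_nonneg_left hwn hCB0
    calc ‖((cMatExp C₁ t) *ᵥ v) i‖ ≤ ‖(cMatExp C₁ t) *ᵥ v‖ := norm_le_pi_norm _ i
      _ ≤ K₁ * Real.exp (-α₁ * t) * ‖v‖ := hK₁ t ht0' v
      _ ≤ K₁ * Real.exp (-α₁ * t) * (CB * (K₂ * Real.exp (-α₂ * (T - t)))) := by
          refine mul_le_mul_of_nonneg_left hvn (by positivity)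
      _ = D * (Real.exp (-α₁ * t) * Real.exp (-α₂ * (T - t))) := by rw [hD]; ring
      _ ≤ D * Real.exp (-γ * T) := by
          refine mul_le_mul_of_nonneg_left ?_ hD0
          rw [← Real.exp_add]
          refine Real.exp_le_exp.mpr ?_
          have h1 : -α₁ * t ≤ -γ * t := by
            have : γ ≤ α₁ := min_le_left _ _
            nlinarith
          have h2 : -α₂ * (T - t) ≤ -γ * (T - t) := by
            have : γ ≤ α₂ := min_le_right _ _
            nlinarith
          nlinarith
  -- conclude by squeezing
  have hnorm : ∀ T : ℝ, 0 ≤ T →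
      ‖((Matrix.of fun a b =>
          ∫ t in (0:ℝ)..T, (cMatExp C₁ t * B * cMatExp C₂ᴴ t) a b) *
        cMatExp (-C₂ᴴ) T) i j‖ ≤ D * Real.exp (-γ * T) * T := by
    intro T hT
    rw [hG T]
    have := intervalIntegral.norm_integral_le_of_norm_le_const (hbound T hT)
    calc ‖∫ t in (0:ℝ)..T,
          ((cMatExp C₁ t * B * cMatExp C₂ᴴ t) * cMatExp (-C₂ᴴ) T) i j‖
        ≤ D * Real.exp (-γ * T) * |T - 0| := this
      _ = D * Real.exp (-γ * T) * T := by rw [sub_zero, abs_of_nonneg hT]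
  have hg0 : Tendsto (fun T : ℝ => D * Real.exp (-γ * T) * T) atTop (nhds 0) := by
    have h1 : Tendsto (fun T : ℝ => (γ * T) ^ 1 * Real.exp (-(γ * T))) atTop (nhds 0) :=
      (Real.tendsto_pow_mul_exp_neg_atTop_nhds_zero 1).comp (tendsto_id.const_mul_atTop hγ0)
    have h2 : Tendsto (fun T : ℝ => (D / γ) * ((γ * T) ^ 1 * Real.exp (-(γ * T))))
        atTop (nhds 0) := by
      have := h1.const_mul (D / γ)
      simpa using this
    refine h2.congr fun T => ?_
    have hγne : γ ≠ 0 := ne_of_gt hγ0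
    rw [pow_one]
    field_simp
  refine squeeze_zero_norm' ?_ hg0
  filter_upwards [eventually_ge_atTop (0:ℝ)] with T hT
  exact hnorm T hT
end

section
/- Let λ ∈ ℂ with Re(λ) = 0, let k ≥ 1, let J = λI_k + N_k where N_k is the k×k nilpotent Jordan block with ones on the superdiagonal, and let D(T) = diag(T^{k−1/2}, T^{k−3/2}, …, T^{1/2}) for T > 0. Then D(T)⁻¹ e^{JT} → 0 as T → ∞. -/
open Matrix Filter

/-- The `k×k` nilpotent Jordan block with ones on the superdiagonal. -/
def nilpBlock (k : ℕ) : Matrix (Fin k) (Fin k) ℂ :=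
  Matrix.of fun i j => if (i : ℕ) + 1 = (j : ℕ) then 1 else 0

/-- The scaling matrix `D(T) = diag(T^{k−1/2}, T^{k−3/2}, …, T^{1/2})`. -/
noncomputable def scaleD (k : ℕ) (T : ℝ) : Matrix (Fin k) (Fin k) ℂ :=
  Matrix.diagonal fun a => ((T ^ ((k : ℝ) - (a : ℕ) - 1/2) : ℝ) : ℂ)

lemma nilpBlock_pow (k n : ℕ) (i j : Fin k) :
    ((nilpBlock k) ^ n) i j = if (i : ℕ) + n = (j : ℕ) then 1 else 0 := by
  induction n generalizing j with
  | zero => simp [Matrix.one_apply, Fin.ext_iff]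
  | succ n ih =>
    rw [pow_succ, Matrix.mul_apply]
    rcases lt_or_ge ((i:ℕ)+n) k with h | h
    · have h1 : ∀ x : Fin k, (nilpBlock k ^ n) i x * nilpBlock k x j
          = if x = (⟨(i:ℕ)+n, h⟩ : Fin k) then nilpBlock k x j else 0 := by
        intro x
        rw [ih]
        by_cases hx : x = (⟨(i:ℕ)+n, h⟩ : Fin k)
        · simp [hx]
        · have : (i:ℕ) + n ≠ (x:ℕ) := by
            simpa [Fin.ext_iff, eq_comm] using hx
          simp [hx, this]
      rw [Finset.sum_congr rfl fun x _ => h1 x, Finset.sum_ite_eq' Finset.univ]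
      simp only [Finset.mem_univ, if_true, nilpBlock, Matrix.of_apply]
      congr 1
    · have h1 : ∀ x : Fin k, (nilpBlock k ^ n) i x * nilpBlock k x j = 0 := by
        intro x
        rw [ih]
        have : (i:ℕ) + n ≠ (x:ℕ) := by have := x.isLt; omega
        simp [this]
      rw [Finset.sum_congr rfl fun x _ => h1 x]
      have : (i:ℕ) + (n+1) ≠ (j:ℕ) := by have := j.isLt; omega
      simp [this]

lemma expN_apply (k : ℕ) (T : ℝ) (i j : Fin k) :
    NormedSpace.exp ((T:ℂ) • nilpBlock k) i j
      = if (i:ℕ) ≤ (j:ℕ) then ((((j:ℕ)-(i:ℕ)).factorial : ℂ))⁻¹ * (T:ℂ)^((j:ℕ)-(i:ℕ))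
        else 0 := by
  rw [NormedSpace.exp_eq_tsum ℂ]
  beta_reduce
  have hz : ∀ n ∉ Finset.range k,
      ((n.factorial : ℂ)⁻¹ • ((T:ℂ) • nilpBlock k)^n) = 0 := by
    intro n hn
    rw [Finset.mem_range, not_lt] at hn
    ext a b
    have : (a:ℕ) + n ≠ (b:ℕ) := by have := b.isLt; omega
    simp [smul_pow, nilpBlock_pow, this]
  rw [tsum_eq_sum hz, Matrix.sum_apply]
  have hterm : ∀ n, ((n.factorial : ℂ)⁻¹ • ((T:ℂ) • nilpBlock k)^n) i j
      = if (i:ℕ) + n = (j:ℕ) then (n.factorial : ℂ)⁻¹ * (T:ℂ)^n else 0 := by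
    intro n
    rw [smul_pow, Matrix.smul_apply, Matrix.smul_apply, nilpBlock_pow]
    simp [mul_ite]
  rw [Finset.sum_congr rfl fun n _ => hterm n]
  by_cases hij : (i:ℕ) ≤ (j:ℕ)
  · rw [Finset.sum_eq_single ((j:ℕ)-(i:ℕ))]
    · have : (i:ℕ) + ((j:ℕ)-(i:ℕ)) = (j:ℕ) := by omega
      simp [this, hij]
    · intro b _ hb
      have : (i:ℕ) + b ≠ (j:ℕ) := by omega
      simp [this]
    · intro h
      exact absurd (Finset.mem_range.2 (by have := j.isLt; omega)) h
  · have : ∀ n ∈ Finset.range k,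
        (if (i:ℕ) + n = (j:ℕ) then (n.factorial : ℂ)⁻¹ * (T:ℂ)^n else 0) = 0 := by
      intro n _
      have : (i:ℕ) + n ≠ (j:ℕ) := by omega
      simp [this]
    rw [Finset.sum_congr rfl this]
    simp [hij]

theorem stmt13 (k : ℕ) (hk : 1 ≤ k) (lam : ℂ) (hlam : lam.re = 0)
    (J : Matrix (Fin k) (Fin k) ℂ) (hJ : J = lam • (1 : Matrix (Fin k) (Fin k) ℂ) + nilpBlock k) :
    ∀ i j, Filter.Tendsto (fun T : ℝ => ((scaleD k T)⁻¹ * cMatExp J T) i j)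
      Filter.atTop (nhds 0) := by
  intro i j
  have hsplit : ∀ T : ℝ, cMatExp J T
      = Matrix.diagonal (fun _ : Fin k => Complex.exp ((T:ℂ) * lam))
        * NormedSpace.exp ((T:ℂ) • nilpBlock k) := by
    intro T
    have h1 : ((T:ℂ) * lam) • (1 : Matrix (Fin k) (Fin k) ℂ)
        = Matrix.diagonal (fun _ : Fin k => (T:ℂ) * lam) := by
      ext a b
      by_cases hab : a = b <;> simp [hab, Matrix.one_apply, Matrix.diagonal_apply]
    have hc : Commute (((T:ℂ) * lam) • (1 : Matrix (Fin k) (Fin k) ℂ))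
        ((T:ℂ) • nilpBlock k) := (Commute.one_left _).smul_left _
    have h2 : NormedSpace.exp (fun _ : Fin k => (T:ℂ) * lam)
        = fun _ : Fin k => Complex.exp ((T:ℂ) * lam) := by
      rw [Pi.exp_def, Complex.exp_eq_exp_ℂ]
    rw [cMatExp, hJ, smul_add, smul_smul, Matrix.exp_add_of_commute _ _ hc, h1,
      Matrix.exp_diagonal, h2]
  by_cases hij : (i:ℕ) ≤ (j:ℕ)
  · -- the interesting case
    have hy : (0:ℝ) < (k:ℝ) - (j:ℕ) - 1/2 := by
      have : ((j:ℕ):ℝ) + 1 ≤ (k:ℝ) := by exact_mod_cast j.isLt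
      linarith
    refine squeeze_zero_norm' ?_ (tendsto_rpow_neg_atTop hy)
    filter_upwards [eventually_ge_atTop 1] with T hT
    have hT0 : (0:ℝ) < T := lt_of_lt_of_le one_pos hT
    have hd : ∀ a : Fin k, (((T ^ ((k:ℝ) - (a:ℕ) - 1/2) : ℝ) : ℂ)) ≠ 0 := fun a =>
      Complex.ofReal_ne_zero.2 (ne_of_gt (Real.rpow_pos_of_pos hT0 _))
    have hinv : (scaleD k T)⁻¹
        = Matrix.diagonal (fun a : Fin k => (((T ^ ((k:ℝ) - (a:ℕ) - 1/2) : ℝ) : ℂ))⁻¹) := by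
      apply Matrix.inv_eq_right_inv
      rw [scaleD, Matrix.diagonal_mul_diagonal]
      ext a b
      rcases eq_or_ne a b with rfl | hab
      · rw [Matrix.diagonal_apply_eq, Matrix.one_apply_eq]
        exact mul_inv_cancel₀ (hd a)
      · simp [Matrix.diagonal_apply_ne _ hab, Matrix.one_apply_ne hab]
    have hentry : ((scaleD k T)⁻¹ * cMatExp J T) i j
        = (((T ^ ((k:ℝ) - (i:ℕ) - 1/2) : ℝ):ℂ))⁻¹ * (Complex.exp ((T:ℂ)*lam)
            * (((((j:ℕ)-(i:ℕ)).factorial : ℂ))⁻¹ * (T:ℂ)^((j:ℕ)-(i:ℕ)))) := by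
      rw [hinv, hsplit T, ← Matrix.mul_assoc, Matrix.diagonal_mul_diagonal,
        Matrix.diagonal_mul, expN_apply, if_pos hij]
      ring
    rw [hentry]
    have hre : ((T:ℂ) * lam).re = 0 := by simp [Complex.mul_re, hlam]
    have hnexp : ‖Complex.exp ((T:ℂ)*lam)‖ = 1 := by
      rw [Complex.norm_exp, hre, Real.exp_zero]
    have hnd : ‖(((T ^ ((k:ℝ) - (i:ℕ) - 1/2) : ℝ):ℂ))‖ = T ^ ((k:ℝ) - (i:ℕ) - 1/2) := by
      rw [Complex.norm_real, Real.norm_eq_abs, abs_of_pos (Real.rpow_pos_of_pos hT0 _)]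
    have hnT : ‖(T:ℂ)‖ = T := by
      rw [Complex.norm_real, Real.norm_eq_abs, abs_of_pos hT0]
    rw [norm_mul, norm_mul, norm_mul, norm_inv, norm_inv, norm_pow, hnexp, hnd, hnT,
      Complex.norm_natCast]
    have hfac : ((((j:ℕ)-(i:ℕ)).factorial : ℝ))⁻¹ ≤ 1 := by
      apply inv_le_one_of_one_le₀
      exact_mod_cast Nat.one_le_iff_ne_zero.2 (Nat.factorial_ne_zero _)
    have h2 : (T ^ ((k:ℝ) - (i:ℕ) - 1/2))⁻¹
          * (1 * (((((j:ℕ)-(i:ℕ)).factorial : ℝ))⁻¹ * T^((j:ℕ)-(i:ℕ))))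
        ≤ (T ^ ((k:ℝ) - (i:ℕ) - 1/2))⁻¹ * T^((j:ℕ)-(i:ℕ)) := by
      rw [one_mul]
      exact mul_le_mul_of_nonneg_left
        (mul_le_of_le_one_left (pow_nonneg hT0.le _) hfac)
        (inv_nonneg.2 (Real.rpow_nonneg hT0.le _))
    have h3 : (T ^ ((k:ℝ) - (i:ℕ) - 1/2))⁻¹ * T^((j:ℕ)-(i:ℕ))
        = T ^ (-((k:ℝ) - (j:ℕ) - 1/2)) := by
      rw [← Real.rpow_natCast T ((j:ℕ)-(i:ℕ)), ← Real.rpow_neg hT0.le,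
        ← Real.rpow_add hT0]
      congr 1
      rw [Nat.cast_sub hij]
      push_cast
      ring
    exact le_of_le_of_eq h2 h3
  · -- entries below the diagonal vanish identically
    have h0 : ∀ T : ℝ, ((scaleD k T)⁻¹ * cMatExp J T) i j = 0 := by
      intro T
      rw [hsplit T, scaleD, Matrix.inv_diagonal, ← Matrix.mul_assoc,
        Matrix.diagonal_mul_diagonal, Matrix.diagonal_mul, expN_apply, if_neg hij, mul_zero]
    simp only [h0]
    exact tendsto_const_nhds
end

section
/- Let A ∈ ℝ^{n×n}, let Q ∈ ℂ^{n×n} be invertible, let D : (0,∞) → ℂ^{n×n} take invertible values, and let W₁,…,W_n ∈ ℂ^{n×n} be Hermitian matrices; write W_∞(p) = ∑_{i=1}^n p_i W_i. Assume: (i) for every p ∈ Δ, D(T)⁻¹ Q⁻¹ W̃(p;T) Q^{−*} D(T)^{−*} → W_∞(p) entrywise as T → ∞; (ii) W_∞(p) is positive definite whenever all entries of p ∈ Δ are positive; (iii) there is a unique p^∞ minimizing −log det W_∞(p) over {p ∈ Δ : W_∞(p) positive definite}. Then for every T > 0 the set of minimizers of −log det W̃(p;T) over {p ∈ Δ : W̃(p;T)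 positive definite} is nonempty, and for any choice of minimizers p^T one has p^T → p^∞ as T → ∞. -/
open Matrix Filter intervalIntegral
open scoped ComplexOrder

/-- Membership in the standard simplex Δ ⊆ ℝⁿ. -/
def inSimplex {n : ℕ} (p : Fin n → ℝ) : Prop :=
  (∀ i, 0 ≤ p i) ∧ ∑ i, p i = 1


section Aux
attribute [local instance] Matrix.linftyOpNormedAddCommGroup Matrix.linftyOpNormedRing Matrix.linftyOpNormedAlgebra

lemma continuous_matExp {n : ℕ} (A : Matrix (Fin n) (Fin n) ℝ) :
    Continuous fun t : ℝ => matExp A t := by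
  unfold matExp
  exact NormedSpace.exp_continuous.comp (continuous_id.smul continuous_const)

lemma matExp_mul_inv {n : ℕ} (A : Matrix (Fin n) (Fin n) ℝ) (t : ℝ) :
    matExp A t * matExp A (-t) = 1 := by
  unfold matExp
  rw [← Matrix.exp_add_of_commute]
  · rw [neg_smul, add_neg_cancel, NormedSpace.exp_zero]
  · simp [Commute, SemiconjBy]
end Aux

variable {n : ℕ}

lemma continuous_entry (A B : Matrix (Fin n) (Fin n) ℝ) (i j : Fin n) :
    Continuous fun t : ℝ => (matExp A t * B * (matExp A t)ᵀ) i j := by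
  have h := continuous_matExp A
  exact (((h.matrix_mul continuous_const).matrix_mul h.matrix_transpose).matrix_elem i j)

lemma integrable_entry (A B : Matrix (Fin n) (Fin n) ℝ) (i j : Fin n) (T : ℝ) :
    IntervalIntegrable (fun t : ℝ => (matExp A t * B * (matExp A t)ᵀ) i j)
      MeasureTheory.volume 0 T :=
  (continuous_entry A B i j).intervalIntegrable 0 T

lemma matExp_T_mulVec_ne (A : Matrix (Fin n) (Fin n) ℝ) (t : ℝ) {x : Fin n → ℝ}
    (hx : x ≠ 0) : (matExp A t)ᵀ *ᵥ x ≠ 0 := by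
  intro h
  apply hx
  have h1 : (matExp A (-t))ᵀ *ᵥ ((matExp A t)ᵀ *ᵥ x) = x := by
    rw [mulVec_mulVec, ← transpose_mul, matExp_mul_inv, transpose_one, one_mulVec]
  rw [h, mulVec_zero] at h1
  exact h1.symm

lemma integral_double_sum {T : ℝ} {f : Fin n → Fin n → ℝ → ℝ}
    (hf : ∀ i j, IntervalIntegrable (f i j) MeasureTheory.volume 0 T) :
    (∫ t in (0:ℝ)..T, ∑ i, ∑ j, f i j t) = ∑ i, ∑ j, ∫ t in (0:ℝ)..T, f i j t := by
  have h1 : ∀ t, (∑ i, ∑ j, f i j t) = ∑ p : Fin n × Fin n, f p.1 p.2 t := fun t =>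
    (Fintype.sum_prod_type (fun p : Fin n × Fin n => f p.1 p.2 t)).symm
  have h2 : (∫ t in (0:ℝ)..T, ∑ p : Fin n × Fin n, f p.1 p.2 t)
      = ∑ p : Fin n × Fin n, ∫ t in (0:ℝ)..T, f p.1 p.2 t :=
    intervalIntegral.integral_finset_sum (fun p _ => hf p.1 p.2)
  simp_rw [h1]
  rw [h2, Fintype.sum_prod_type]

lemma quad_eq (A B : Matrix (Fin n) (Fin n) ℝ) (T : ℝ) (x : Fin n → ℝ) :
    x ⬝ᵥ (gramian A B T) *ᵥ x
      = ∫ t in (0:ℝ)..T, x ⬝ᵥ ((matExp A t * B * (matExp A t)ᵀ) *ᵥ x) := by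
  have key : ∀ M : Matrix (Fin n) (Fin n) ℝ, ∀ x : Fin n → ℝ,
      x ⬝ᵥ M *ᵥ x = ∑ i, ∑ j, x i * (M i j * x j) := by
    intro M x; simp [dotProduct, mulVec, Finset.mul_sum]
  rw [key]
  have : ∀ i j : Fin n, x i * (gramian A B T i j * x j)
      = ∫ t in (0:ℝ)..T, x i * ((matExp A t * B * (matExp A t)ᵀ) i j * x j) := by
    intro i j
    show x i * ((∫ t in (0:ℝ)..T, (matExp A t * B * (matExp A t)ᵀ) i j) * x j) = _
    rw [← intervalIntegral.integral_mul_const, ← intervalIntegral.integral_const_mul]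
  simp_rw [this]
  have R : (∫ t in (0:ℝ)..T, x ⬝ᵥ ((matExp A t * B * (matExp A t)ᵀ) *ᵥ x))
      = ∑ i, ∑ j, ∫ t in (0:ℝ)..T, x i * ((matExp A t * B * (matExp A t)ᵀ) i j * x j) := by
    simp_rw [key]
    exact integral_double_sum fun i j =>
      ((integrable_entry A B i j T).mul_const _).const_mul _
  rw [R]

lemma quad_pt (E : Matrix (Fin n) (Fin n) ℝ) (p : Fin n → ℝ) (x : Fin n → ℝ) :
    x ⬝ᵥ ((E * diagonal p * Eᵀ) *ᵥ x) = ∑ i, p i * ((Eᵀ *ᵥ x) i)^2 := by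
  rw [← mulVec_mulVec, ← mulVec_mulVec, dotProduct_mulVec, ← mulVec_transpose]
  simp only [dotProduct, mulVec_diagonal]
  exact Finset.sum_congr rfl fun i _ => by ring


lemma integrand_transpose (A : Matrix (Fin n) (Fin n) ℝ) (p : Fin n → ℝ) (t : ℝ) :
    (matExp A t * diagonal p * (matExp A t)ᵀ)ᵀ = matExp A t * diagonal p * (matExp A t)ᵀ := by
  rw [transpose_mul, transpose_mul, transpose_transpose, diagonal_transpose, Matrix.mul_assoc]

lemma gramian_isHermitian (A : Matrix (Fin n) (Fin n) ℝ) (p : Fin n → ℝ) (T : ℝ) :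
    (gramian A (diagonal p) T).IsHermitian := by
  show _ᴴ = _
  ext i j
  show (gramian A (diagonal p) T) j i = (gramian A (diagonal p) T) i j
  unfold gramian
  congr 1
  ext t
  conv_lhs => rw [← integrand_transpose A p t]
  rfl

lemma continuous_quad (A B : Matrix (Fin n) (Fin n) ℝ) (x : Fin n → ℝ) :
    Continuous fun t : ℝ => x ⬝ᵥ ((matExp A t * B * (matExp A t)ᵀ) *ᵥ x) := by
  have h := continuous_matExp A
  exact Continuous.dotProduct continuous_const
    (((h.matrix_mul continuous_const).matrix_mul h.matrix_transpose).matrix_mulVec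
      continuous_const)

lemma gramian_posSemidef (A : Matrix (Fin n) (Fin n) ℝ) {p : Fin n → ℝ} {T : ℝ}
    (hp : ∀ i, 0 ≤ p i) (hT : 0 ≤ T) : (gramian A (diagonal p) T).PosSemidef := by
  refine .of_dotProduct_mulVec_nonneg (gramian_isHermitian A p T) fun x => ?_
  rw [star_trivial, quad_eq]
  apply intervalIntegral.integral_nonneg hT
  intro u _
  rw [quad_pt]
  exact Finset.sum_nonneg fun i _ => mul_nonneg (hp i) (sq_nonneg _)

lemma gramian_posDef (A : Matrix (Fin n) (Fin n) ℝ) {p : Fin n → ℝ} {T : ℝ}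
    (hp : ∀ i, 0 < p i) (hT : 0 < T) : (gramian A (diagonal p) T).PosDef := by
  refine .of_dotProduct_mulVec_pos (gramian_isHermitian A p T) fun x hx => ?_
  rw [star_trivial, quad_eq]
  apply intervalIntegral.intervalIntegral_pos_of_pos
    ((continuous_quad A (diagonal p) x).intervalIntegrable 0 T) _ hT
  intro t
  rw [quad_pt]
  have hy := matExp_T_mulVec_ne A t hx
  obtain ⟨i0, hi0⟩ : ∃ i0, ((matExp A t)ᵀ *ᵥ x) i0 ≠ 0 := by
    by_contra h
    push_neg at h
    exact hy (funext h)
  refine Finset.sum_pos' (fun i _ => mul_nonneg (hp i).le (sq_nonneg _)) ⟨i0, Finset.mem_univ _, ?_⟩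
  exact mul_pos (hp i0) (by positivity)

lemma diagonal_eq_sum (p : Fin n → ℝ) :
    (diagonal p : Matrix (Fin n) (Fin n) ℝ) = ∑ k, p k • diagonal ((Pi.single k 1 : Fin n → ℝ)) := by
  ext a b
  rw [Matrix.sum_apply]
  by_cases h : a = b
  · subst h
    simp [Matrix.diagonal_apply_eq, Pi.single_apply]
  · simp [Matrix.diagonal_apply_ne _ h]

lemma gramian_linear (A : Matrix (Fin n) (Fin n) ℝ) (p : Fin n → ℝ) (T : ℝ) :
    gramian A (diagonal p) T = ∑ k, p k • gramian A (diagonal ((Pi.single k 1 : Fin n → ℝ))) T := by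
  ext i j
  have hmat : ∀ t, (matExp A t * diagonal p * (matExp A t)ᵀ) i j
      = ∑ k, p k * ((matExp A t * diagonal ((Pi.single k 1 : Fin n → ℝ)) * (matExp A t)ᵀ) i j) := by
    intro t
    rw [diagonal_eq_sum, Finset.mul_sum, Finset.sum_mul, Matrix.sum_apply]
    exact Finset.sum_congr rfl fun k _ => by
      rw [mul_smul_comm, smul_mul_assoc, Matrix.smul_apply, smul_eq_mul]
  show (∫ t in (0:ℝ)..T, (matExp A t * diagonal p * (matExp A t)ᵀ) i j) = _
  simp_rw [hmat]
  rw [intervalIntegral.integral_finset_sum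
    (fun k _ => (integrable_entry A (diagonal ((Pi.single k 1 : Fin n → ℝ))) i j T).const_mul (p k))]
  rw [Matrix.sum_apply]
  exact Finset.sum_congr rfl fun k _ => by
    rw [Matrix.smul_apply, smul_eq_mul, intervalIntegral.integral_const_mul]
    rfl

variable {n : ℕ}

lemma posDef_of_posSemidef_det_ne_zero {𝕜 : Type*} [RCLike 𝕜] {m : Type*} [Fintype m]
    [DecidableEq m] {M : Matrix m m 𝕜} (hM : M.PosSemidef) (hdet : M.det ≠ 0) : M.PosDef := by
  refine .of_dotProduct_mulVec_pos hM.1 fun x hx => ?_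
  have h1 : star x ⬝ᵥ M *ᵥ x ≠ 0 := by
    rw [Ne, hM.dotProduct_mulVec_zero_iff]
    intro h0
    have hu : IsUnit M := (Matrix.isUnit_iff_isUnit_det M).2 (isUnit_iff_ne_zero.2 hdet)
    have hinj := Matrix.mulVec_injective_iff_isUnit.2 hu
    exact hx (hinj (by simpa using h0))
  exact lt_of_le_of_ne (hM.dotProduct_mulVec_nonneg x) (Ne.symm h1)

lemma map_ofReal_eq {M : Matrix (Fin n) (Fin n) ℝ} :
    M.map Complex.ofReal = M.map Complex.ofRealHom := rfl

lemma posSemidef_map_ofReal {M : Matrix (Fin n) (Fin n) ℝ} (hM : M.PosSemidef) :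
    (M.map Complex.ofReal).PosSemidef := by
  obtain ⟨B, rfl⟩ : ∃ B : Matrix (Fin n) (Fin n) ℝ, M = Bᴴ * B := by
    open scoped MatrixOrder in exact CStarAlgebra.nonneg_iff_eq_star_mul_self.mp hM.nonneg
  have h : (Bᴴ * B).map Complex.ofReal
      = (B.map Complex.ofReal)ᴴ * (B.map Complex.ofReal) := by
    rw [map_ofReal_eq, Matrix.map_mul (f := Complex.ofRealHom)]
    congr 1
    rw [← map_ofReal_eq, Matrix.conjTranspose_map Complex.ofReal (by intro a; simp)]
  rw [h]
  exact Matrix.posSemidef_conjTranspose_mul_self _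

lemma det_map_ofReal (M : Matrix (Fin n) (Fin n) ℝ) :
    (M.map Complex.ofReal).det = (M.det : ℂ) := by
  rw [map_ofReal_eq]
  exact (Complex.ofRealHom.map_det M).symm

lemma re_det_conj (N : Matrix (Fin n) (Fin n) ℂ) (M : Matrix (Fin n) (Fin n) ℝ) :
    ((N * M.map Complex.ofReal * Nᴴ).det).re = Complex.normSq N.det * M.det := by
  rw [Matrix.det_mul, Matrix.det_mul, Matrix.det_conjTranspose, det_map_ofReal]
  have h : N.det * (M.det : ℂ) * star N.det = ((Complex.normSq N.det * M.det : ℝ) : ℂ) := by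
    rw [Complex.star_def, mul_right_comm, Complex.mul_conj]
    push_cast
    ring
  rw [h, Complex.ofReal_re]

lemma sum_smul_isHermitian {W : Fin n → Matrix (Fin n) (Fin n) ℂ}
    (hW : ∀ i, (W i).IsHermitian) (p : Fin n → ℝ) : (∑ k, p k • W k).IsHermitian := by
  show _ᴴ = _
  rw [Matrix.conjTranspose_sum]
  exact Finset.sum_congr rfl fun k _ => by
    rw [Matrix.conjTranspose_smul, star_trivial, (hW k).eq]

lemma inSimplex_iff_mem {p : Fin n → ℝ} : inSimplex p ↔ p ∈ stdSimplex ℝ (Fin n) := Iff.rfl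

lemma continuous_det_gramian (A : Matrix (Fin n) (Fin n) ℝ) (T : ℝ) :
    Continuous fun p : Fin n → ℝ => (gramian A (diagonal p) T).det := by
  have h : (fun p : Fin n → ℝ => gramian A (diagonal p) T)
      = fun p => ∑ k, p k • gramian A (diagonal (Pi.single k 1 : Fin n → ℝ)) T :=
    funext fun p => gramian_linear A p T
  have hc : Continuous fun p : Fin n → ℝ => gramian A (diagonal p) T := by
    rw [h]
    exact continuous_finset_sum _ fun k _ => (continuous_apply k).smul continuous_const
  exact hc.matrix_det

lemma partA (hn : n ≠ 0) (A : Matrix (Fin n) (Fin n) ℝ) {T : ℝ} (hT : 0 < T) :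
    ∃ p : Fin n → ℝ,
      (inSimplex p ∧ (gramian A (Matrix.diagonal p) T).PosDef) ∧
      ∀ q : Fin n → ℝ, inSimplex q ∧ (gramian A (Matrix.diagonal q) T).PosDef →
        -Real.log (gramian A (Matrix.diagonal p) T).det
          ≤ -Real.log (gramian A (Matrix.diagonal q) T).det := by
  have hS : IsCompact (stdSimplex ℝ (Fin n)) := isCompact_stdSimplex _ _
  have hu : (fun _ => (n:ℝ)⁻¹ : Fin n → ℝ) ∈ stdSimplex ℝ (Fin n) := by
    constructor
    · intro i; positivity
    · simp only [Finset.sum_const, Finset.card_univ, Fintype.card_fin, nsmul_eq_mul]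
      field_simp
  obtain ⟨p₀, hp₀S, hp₀max⟩ := hS.exists_isMaxOn ⟨_, hu⟩
    (continuous_det_gramian A T).continuousOn
  have hupos : 0 < (gramian A (diagonal (fun _ => (n:ℝ)⁻¹ : Fin n → ℝ)) T).det :=
    (gramian_posDef A (fun i => by positivity) hT).det_pos
  have hdet₀ : 0 < (gramian A (diagonal p₀) T).det := lt_of_lt_of_le hupos (hp₀max hu)
  have hPD₀ : (gramian A (diagonal p₀) T).PosDef :=
    posDef_of_posSemidef_det_ne_zero (gramian_posSemidef A hp₀S.1 hT.le) hdet₀.ne'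
  refine ⟨p₀, ⟨hp₀S, hPD₀⟩, ?_⟩
  rintro q ⟨hqS, hqPD⟩
  have hq : 0 < (gramian A (diagonal q) T).det := hqPD.det_pos
  have hle : (gramian A (diagonal q) T).det ≤ (gramian A (diagonal p₀) T).det := hp₀max hqS
  rw [neg_le_neg_iff]
  exact Real.log_le_log hq hle

noncomputable def scaled (Q : Matrix (Fin n) (Fin n) ℂ) (D : ℝ → Matrix (Fin n) (Fin n) ℂ)
    (A : Matrix (Fin n) (Fin n) ℝ) (p : Fin n → ℝ) (T : ℝ) : Matrix (Fin n) (Fin n) ℂ :=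
  (D T)⁻¹ * Q⁻¹ * (gramian A (Matrix.diagonal p) T).map Complex.ofReal * (Q⁻¹)ᴴ * ((D T)⁻¹)ᴴ

lemma scaled_eq (Q : Matrix (Fin n) (Fin n) ℂ) (D : ℝ → Matrix (Fin n) (Fin n) ℂ)
    (A : Matrix (Fin n) (Fin n) ℝ) (p : Fin n → ℝ) (T : ℝ) :
    scaled Q D A p T = ((D T)⁻¹ * Q⁻¹) * (gramian A (Matrix.diagonal p) T).map Complex.ofReal *
      ((D T)⁻¹ * Q⁻¹)ᴴ := by
  unfold scaled
  simp only [conjTranspose_mul, Matrix.mul_assoc]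

lemma scaled_posSemidef {Q : Matrix (Fin n) (Fin n) ℂ} {D : ℝ → Matrix (Fin n) (Fin n) ℂ}
    (A : Matrix (Fin n) (Fin n) ℝ) {p : Fin n → ℝ} {T : ℝ} (hp : ∀ i, 0 ≤ p i) (hT : 0 ≤ T) :
    (scaled Q D A p T).PosSemidef := by
  rw [scaled_eq]
  exact (posSemidef_map_ofReal (gramian_posSemidef A hp hT)).mul_mul_conjTranspose_same _

lemma scaled_det_re (Q : Matrix (Fin n) (Fin n) ℂ) (D : ℝ → Matrix (Fin n) (Fin n) ℂ)
    (A : Matrix (Fin n) (Fin n) ℝ) (p : Fin n → ℝ) (T : ℝ) :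
    ((scaled Q D A p T).det).re
      = Complex.normSq (((D T)⁻¹ * Q⁻¹).det) * (gramian A (Matrix.diagonal p) T).det := by
  rw [scaled_eq]
  exact re_det_conj _ _

lemma scaled_linear (Q : Matrix (Fin n) (Fin n) ℂ) (D : ℝ → Matrix (Fin n) (Fin n) ℂ)
    (A : Matrix (Fin n) (Fin n) ℝ) (p : Fin n → ℝ) (T : ℝ) :
    scaled Q D A p T = ∑ k, p k • scaled Q D A (Pi.single k 1) T := by
  unfold scaled
  rw [gramian_linear]
  have hmap : ((∑ k, p k • gramian A (diagonal (Pi.single k 1 : Fin n → ℝ)) T).map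
        Complex.ofReal)
      = ∑ k, p k • (gramian A (diagonal (Pi.single k 1 : Fin n → ℝ)) T).map Complex.ofReal := by
    ext i j
    simp only [Matrix.map_apply, Matrix.sum_apply, Matrix.smul_apply, smul_eq_mul,
      Complex.real_smul]
    push_cast
    rfl
  rw [hmap]
  simp only [Finset.mul_sum, Finset.sum_mul, mul_smul_comm, smul_mul_assoc]

lemma single_mem_simplex (hn : n ≠ 0) (k : Fin n) : inSimplex (Pi.single k 1 : Fin n → ℝ) := by
  constructor
  · intro i
    rcases eq_or_ne k i with h | h
    · subst h; simp
    · simp [Pi.single_apply, Ne.symm h]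
  · simp

lemma hle_all (A : Matrix (Fin n) (Fin n) ℝ) {T : ℝ} (hT : 0 < T) {pstar : Fin n → ℝ}
    (hPD : (gramian A (diagonal pstar) T).PosDef)
    (hminT : ∀ q : Fin n → ℝ, inSimplex q ∧ (gramian A (Matrix.diagonal q) T).PosDef →
      -Real.log (gramian A (Matrix.diagonal pstar) T).det
        ≤ -Real.log (gramian A (Matrix.diagonal q) T).det)
    {q : Fin n → ℝ} (hq : inSimplex q) :
    (gramian A (diagonal q) T).det ≤ (gramian A (diagonal pstar) T).det := by
  by_cases h : 0 < (gramian A (diagonal q) T).det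
  · have hqPD : (gramian A (diagonal q) T).PosDef :=
      posDef_of_posSemidef_det_ne_zero (gramian_posSemidef A hq.1 hT.le) h.ne'
    have hm := hminT q ⟨hq, hqPD⟩
    have ha := hPD.det_pos
    rw [neg_le_neg_iff, Real.log_le_log_iff h ha] at hm
    exact hm
  · push_neg at h
    exact le_trans h hPD.det_pos.le

lemma keyLemma (hn : n ≠ 0) (A : Matrix (Fin n) (Fin n) ℝ) (Q : Matrix (Fin n) (Fin n) ℂ)
    (D : ℝ → Matrix (Fin n) (Fin n) ℂ)
    (W : Fin n → Matrix (Fin n) (Fin n) ℂ) (hW : ∀ i, (W i).IsHermitian)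
    (hconv : ∀ p : Fin n → ℝ, inSimplex p → ∀ i j,
      Filter.Tendsto (fun T : ℝ => scaled Q D A p T i j)
        Filter.atTop (nhds ((∑ k, p k • W k) i j)))
    (pinf : Fin n → ℝ)
    (hfeas : inSimplex pinf ∧ (∑ k, pinf k • W k).PosDef)
    (huniq : ∀ p : Fin n → ℝ, inSimplex p ∧ (∑ k, p k • W k).PosDef →
      (∀ q : Fin n → ℝ, inSimplex q ∧ (∑ k, q k • W k).PosDef →
        -Real.log (∑ k, p k • W k).det.re ≤ -Real.log (∑ k, q k • W k).det.re) →
      p = pinf)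
    (pT : ℝ → (Fin n → ℝ))
    (hpT : ∀ T : ℝ, 0 < T →
      (inSimplex (pT T) ∧ (gramian A (Matrix.diagonal (pT T)) T).PosDef) ∧
      ∀ q : Fin n → ℝ, inSimplex q ∧ (gramian A (Matrix.diagonal q) T).PosDef →
        -Real.log (gramian A (Matrix.diagonal (pT T)) T).det
          ≤ -Real.log (gramian A (Matrix.diagonal q) T).det)
    (L : Filter ℝ) (hL : L.NeBot) (hLle : L ≤ atTop) (x : Fin n → ℝ)
    (hx : Tendsto pT L (nhds x)) : x = pinf := by
  have hTpos : ∀ᶠ T in L, 0 < T := hLle (eventually_gt_atTop 0)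
  have hsimplex : ∀ᶠ T in L, inSimplex (pT T) := hTpos.mono fun T hT => (hpT T hT).1.1
  have hxS : inSimplex x :=
    inSimplex_iff_mem.mpr <| (isClosed_stdSimplex _ _).mem_of_tendsto hx
      (hsimplex.mono fun T h => inSimplex_iff_mem.mp h)
  -- tendsto of the scaled matrix along the moving minimizers
  have hmT : Tendsto (fun T => scaled Q D A (pT T) T) L (nhds (∑ k, x k • W k)) := by
    refine tendsto_pi_nhds.2 fun i => ?_; refine tendsto_pi_nhds.2 fun j => ?_
    have hent : ∀ T, scaled Q D A (pT T) T i j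
        = ∑ k, pT T k • scaled Q D A (Pi.single k 1) T i j := by
      intro T
      rw [scaled_linear]
      simp [Matrix.sum_apply]
    have hrhs : (∑ k, x k • W k) i j = ∑ k, x k • W k i j := by
      simp [Matrix.sum_apply]
    rw [hrhs]
    have hlim : Tendsto (fun T => ∑ k, pT T k • scaled Q D A (Pi.single k 1) T i j) L
        (nhds (∑ k, x k • W k i j)) := by
      apply tendsto_finset_sum
      intro k _
      have h1 : Tendsto (fun T => pT T k) L (nhds (x k)) :=
        ((continuous_apply k).tendsto x).comp hx
      have h2 : Tendsto (fun T => scaled Q D A (Pi.single k 1) T i j) L (nhds (W k i j)) := by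
        have := (hconv (Pi.single k 1) (single_mem_simplex hn k) i j).mono_left hLle
        have hrhs2 : (∑ m, (Pi.single k 1 : Fin n → ℝ) m • W m) i j = W k i j := by
          rw [Matrix.sum_apply]
          simp [Pi.single_apply, ite_smul]
        rwa [hrhs2] at this
      exact h1.smul h2
    exact hlim.congr fun T => (hent T).symm
  have hdetT : Tendsto (fun T => ((scaled Q D A (pT T) T).det).re) L
      (nhds ((∑ k, x k • W k).det.re)) :=
    (Complex.continuous_re.tendsto _).comp ((continuous_id.matrix_det.tendsto _).comp hmT)
  have hdetq : ∀ q : Fin n → ℝ, inSimplex q →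
      Tendsto (fun T => ((scaled Q D A q T).det).re) L (nhds ((∑ k, q k • W k).det.re)) := by
    intro q hq
    have hm : Tendsto (fun T => scaled Q D A q T) L (nhds (∑ k, q k • W k)) := by
      refine tendsto_pi_nhds.2 fun i => ?_; refine tendsto_pi_nhds.2 fun j => ?_
      exact (hconv q hq i j).mono_left hLle
    exact (Complex.continuous_re.tendsto _).comp ((continuous_id.matrix_det.tendsto _).comp hm)
  have hmain : ∀ q : Fin n → ℝ, inSimplex q →
      (∑ k, q k • W k).det.re ≤ (∑ k, x k • W k).det.re := by
    intro q hq
    refine le_of_tendsto_of_tendsto (hdetq q hq) hdetT ?_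
    filter_upwards [hTpos] with T hT
    rw [scaled_det_re, scaled_det_re]
    exact mul_le_mul_of_nonneg_left
      (hle_all A hT (hpT T hT).1.2 (hpT T hT).2 hq) (Complex.normSq_nonneg _)
  have hpinfpos : 0 < (∑ k, pinf k • W k).det.re := by
    have h := hfeas.2.det_pos
    rw [Complex.lt_def] at h
    simpa using h.1
  have hxpos : 0 < (∑ k, x k • W k).det.re := lt_of_lt_of_le hpinfpos (hmain pinf hfeas.1)
  have hPSD : (∑ k, x k • W k).PosSemidef := by
    refine .of_dotProduct_mulVec_nonneg (sum_smul_isHermitian hW x) fun y => ?_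
    have hc : Continuous fun M : Matrix (Fin n) (Fin n) ℂ => star y ⬝ᵥ M *ᵥ y :=
      continuous_const.dotProduct (continuous_id.matrix_mulVec continuous_const)
    have hq : Tendsto (fun T => star y ⬝ᵥ (scaled Q D A (pT T) T) *ᵥ y) L
        (nhds (star y ⬝ᵥ (∑ k, x k • W k) *ᵥ y)) := (hc.tendsto _).comp hmT
    have hev : ∀ᶠ T in L, 0 ≤ star y ⬝ᵥ (scaled Q D A (pT T) T) *ᵥ y := by
      filter_upwards [hTpos, hsimplex] with T hT hs
      exact (scaled_posSemidef A hs.1 hT.le).dotProduct_mulVec_nonneg y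
    rw [Complex.le_def]
    constructor
    · refine ge_of_tendsto ((Complex.continuous_re.tendsto _).comp hq) ?_
      filter_upwards [hev] with T h
      rw [Complex.le_def] at h
      simpa using h.1
    · have him : Tendsto (fun T => (star y ⬝ᵥ (scaled Q D A (pT T) T) *ᵥ y).im) L
        (nhds ((star y ⬝ᵥ (∑ k, x k • W k) *ᵥ y).im)) := (Complex.continuous_im.tendsto _).comp hq
      have him0 : Tendsto (fun T => (star y ⬝ᵥ (scaled Q D A (pT T) T) *ᵥ y).im) L (nhds 0) := by
        refine Tendsto.congr' ?_ tendsto_const_nhds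
        filter_upwards [hev] with T h
        rw [Complex.le_def] at h
        simpa using h.2
      simpa using (tendsto_nhds_unique him him0).symm
  have hPD : (∑ k, x k • W k).PosDef := by
    refine posDef_of_posSemidef_det_ne_zero hPSD fun h => ?_
    rw [h] at hxpos
    simp at hxpos
  refine huniq x ⟨hxS, hPD⟩ ?_
  intro q hq
  have hqpos : 0 < (∑ k, q k • W k).det.re := by
    have h := hq.2.det_pos
    rw [Complex.lt_def] at h
    simpa using h.1
  rw [neg_le_neg_iff]
  exact Real.log_le_log hqpos (hmain q hq.1)

theorem stmt18 {n : ℕ} (A : Matrix (Fin n) (Fin n) ℝ)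
    (Q : Matrix (Fin n) (Fin n) ℂ) (hQ : IsUnit Q)
    (D : ℝ → Matrix (Fin n) (Fin n) ℂ) (hD : ∀ T : ℝ, 0 < T → IsUnit (D T))
    (W : Fin n → Matrix (Fin n) (Fin n) ℂ) (hW : ∀ i, (W i).IsHermitian)
    -- (i) convergence of the scaled Gramian to `W_∞(p) = ∑ pᵢ Wᵢ`
    (hconv : ∀ p : Fin n → ℝ, inSimplex p → ∀ i j,
      Filter.Tendsto
        (fun T : ℝ =>
          ((D T)⁻¹ * Q⁻¹ * (gramian A (Matrix.diagonal p) T).map Complex.ofReal *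
            (Q⁻¹)ᴴ * ((D T)⁻¹)ᴴ) i j)
        Filter.atTop (nhds ((∑ k, p k • W k) i j)))
    -- (ii) positive definiteness of `W_∞(p)` for strictly positive `p ∈ Δ`
    (hpd : ∀ p : Fin n → ℝ, inSimplex p → (∀ i, 0 < p i) → (∑ k, p k • W k).PosDef)
    -- (iii) unique infinite-horizon minimizer `p^∞`
    (pinf : Fin n → ℝ)
    (hfeas : inSimplex pinf ∧ (∑ k, pinf k • W k).PosDef)
    (hmin : ∀ q : Fin n → ℝ, inSimplex q ∧ (∑ k, q k • W k).PosDef →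
      -Real.log (∑ k, pinf k • W k).det.re ≤ -Real.log (∑ k, q k • W k).det.re)
    (huniq : ∀ p : Fin n → ℝ, inSimplex p ∧ (∑ k, p k • W k).PosDef →
      (∀ q : Fin n → ℝ, inSimplex q ∧ (∑ k, q k • W k).PosDef →
        -Real.log (∑ k, p k • W k).det.re ≤ -Real.log (∑ k, q k • W k).det.re) →
      p = pinf) :
    -- conclusion
    (∀ T : ℝ, 0 < T → ∃ p : Fin n → ℝ,
      (inSimplex p ∧ (gramian A (Matrix.diagonal p) T).PosDef) ∧
      ∀ q : Fin n → ℝ, inSimplex q ∧ (gramian A (Matrix.diagonal q) T).PosDef →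
        -Real.log (gramian A (Matrix.diagonal p) T).det
          ≤ -Real.log (gramian A (Matrix.diagonal q) T).det) ∧
    (∀ pT : ℝ → (Fin n → ℝ),
      (∀ T : ℝ, 0 < T →
        (inSimplex (pT T) ∧ (gramian A (Matrix.diagonal (pT T)) T).PosDef) ∧
        ∀ q : Fin n → ℝ, inSimplex q ∧ (gramian A (Matrix.diagonal q) T).PosDef →
          -Real.log (gramian A (Matrix.diagonal (pT T)) T).det
            ≤ -Real.log (gramian A (Matrix.diagonal q) T).det) →
      Filter.Tendsto pT Filter.atTop (nhds pinf)) := by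
  rcases Nat.eq_zero_or_pos n with hn0 | hnpos
  · exfalso
    subst hn0
    obtain ⟨-, hsum⟩ := hfeas.1
    simp at hsum
  have hn : n ≠ 0 := hnpos.ne'
  have hconv' : ∀ p : Fin n → ℝ, inSimplex p → ∀ i j,
      Filter.Tendsto (fun T : ℝ => scaled Q D A p T i j)
        Filter.atTop (nhds ((∑ k, p k • W k) i j)) := hconv
  constructor
  · intro T hT
    exact partA hn A hT
  · intro pT hpT
    by_contra hcon
    rw [(nhds_basis_opens pinf).tendsto_right_iff] at hcon
    push_neg at hcon
    obtain ⟨U, ⟨hpinfU, hUopen⟩, hfreq⟩ := hcon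
    have hL0 : (atTop ⊓ Filter.principal {T | pT T ∉ U}).NeBot :=
      Filter.frequently_iff_neBot.mp hfreq
    set L0 := atTop ⊓ Filter.principal {T | pT T ∉ U} with hL0def
    have hL0le : L0 ≤ atTop := inf_le_left
    have hKc : IsCompact (stdSimplex ℝ (Fin n) ∩ Uᶜ) :=
      (isCompact_stdSimplex _ _).inter_right hUopen.isClosed_compl
    have hmap : Filter.map pT L0 ≤ Filter.principal (stdSimplex ℝ (Fin n) ∩ Uᶜ) := by
      rw [Filter.le_principal_iff, Filter.mem_map]
      have h0 : ∀ᶠ T in L0, 0 < T := hL0le (eventually_gt_atTop 0)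
      have h1 : ∀ᶠ T in L0, inSimplex (pT T) := h0.mono fun T hT => (hpT T hT).1.1
      have h2 : ∀ᶠ T in L0, pT T ∉ U := by
        have hmem : {T | pT T ∉ U} ∈ L0 := Filter.mem_inf_of_right (Filter.mem_principal_self _)
        exact hmem
      filter_upwards [h1, h2] with T hT1 hT2
      exact ⟨hT1, hT2⟩
    haveI hmapne : (Filter.map pT L0).NeBot := Filter.map_neBot
    obtain ⟨x, hxmem, hclus⟩ := hKc.exists_clusterPt hmap
    have hclus' : (nhds x ⊓ Filter.map pT L0).NeBot := hclus
    rw [← Filter.push_pull'] at hclus'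
    have hne : (Filter.comap pT (nhds x) ⊓ L0).NeBot := (Filter.map_neBot_iff pT).mp hclus'
    have hxkey : x = pinf :=
      keyLemma hn A Q D W hW hconv' pinf hfeas huniq pT hpT
        (Filter.comap pT (nhds x) ⊓ L0) hne (le_trans inf_le_right hL0le) x
        (Filter.tendsto_comap.mono_left inf_le_left)
    exact hxmem.2 (hxkey ▸ hpinfU)
end
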